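/- arXiv:1109.3327 — 4 statements merged into one kernel-verified Lean document; each statement's English description precedes it below -/
import Mathlib

section
/- For the autonomous Lagrangian L_a(x,y,ẋ,ẏ) = (1/2)ẋ² + 1 − cos(2πx) + (1/2)(ẏ−c)² on 𝕋² = ℝ²/ℤ², the projected Aubry set equals {0} × 𝕊¹; that is, for q ∈ 𝕋² one has h(q,q) = 0 if and only if q = π(0,ỹ) for some ỹ ∈ ℝ. -/
open Set Filter MeasureTheory

noncomputable section

/-- The two-torus `𝕋² = ℝ²/ℤ²`. -/
abbrev T2 : Type := AddCircle (1 : ℝ) × AddCircle (1 : ℝ)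

/-- The quotient map `π : ℝ² → 𝕋²`. -/
def p2 (q : ℝ × ℝ) : T2 := ((q.1 : AddCircle (1 : ℝ)), (q.2 : AddCircle (1 : ℝ)))

/-- `γ` is continuous and piecewise `C¹` on `[a,b]`. -/
def PiecewiseC1On {E : Type*} [NormedAddCommGroup E] [NormedSpace ℝ E]
    (γ : ℝ → E) (a b : ℝ) : Prop :=
  ContinuousOn γ (Set.Icc a b) ∧
  ∃ (N : ℕ) (p : Fin (N + 1) → ℝ), p 0 = a ∧ p (Fin.last N) = b ∧ Monotone p ∧
    ∀ i : Fin N, ContDiffOn ℝ 1 γ (Set.Icc (p i.castSucc) (p i.succ))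

/-- The Lagrangian `L_a(x,y,ẋ,ẏ) = ẋ²/2 + 1 − cos(2πx) + (ẏ−c)²/2`. -/
def La (c : ℝ) (q v : ℝ × ℝ) : ℝ :=
  (1 / 2) * v.1 ^ 2 + 1 - Real.cos (2 * Real.pi * q.1) + (1 / 2) * (v.2 - c) ^ 2

/-- The action of a curve for `L_a` on `[a,b]`. -/
def actionA (c : ℝ) (γ : ℝ → ℝ × ℝ) (a b : ℝ) : ℝ :=
  ∫ s in a..b, La c (γ s) (deriv γ s)

/-- The Lax–Oleinik semigroup `T_t u (q)` for `L_a`. -/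
def Tlo (c t : ℝ) (u : T2 → ℝ) (q : T2) : ℝ :=
  sInf {A : ℝ | ∃ γ : ℝ → ℝ × ℝ, PiecewiseC1On γ 0 t ∧ p2 (γ t) = q ∧
    A = u (p2 (γ 0)) + actionA c γ 0 t}

/-- `F_t(q,q')`: minimal action among curves from `q` to `q'` in time `t`. -/
def Fa (c t : ℝ) (q q' : T2) : ℝ :=
  sInf {A : ℝ | ∃ γ : ℝ → ℝ × ℝ, PiecewiseC1On γ 0 t ∧ p2 (γ 0) = q ∧
    p2 (γ t) = q' ∧ A = actionA c γ 0 t}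

/-- The Peierls barrier `h(q,q') = liminf_{t→+∞} F_t(q,q')`, written as
`sup over T of inf over t ≥ T`. -/
def hA (c : ℝ) (q q' : T2) : ℝ :=
  sSup {r : ℝ | ∃ T : ℝ, r = sInf {A : ℝ | ∃ t : ℝ, 0 < t ∧ T ≤ t ∧ A = Fa c t q q'}}

/-- The circle `{0} × 𝕊¹ ⊆ 𝕋²`. -/
def circ0 : Set T2 := {q : T2 | ∃ yt : ℝ, q = p2 (0, yt)}

/-- The function `u_δ(π(x̃,ỹ)) = max(δ − dist(ỹ − 1/2, ℤ), 0)`. -/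
def udelta (δ : ℝ) (q : T2) : ℝ :=
  max (δ - ‖q.2 - ((1 / 2 : ℝ) : AddCircle (1 : ℝ))‖) 0


namespace Aubry

lemma exists_nat_partition {γ : ℝ → ℝ × ℝ} {a b : ℝ} (h : PiecewiseC1On γ a b) :
    ∃ (N : ℕ) (P : ℕ → ℝ), P 0 = a ∧ P N = b ∧ Monotone P ∧
      ∀ j < N, ContDiffOn ℝ 1 γ (Icc (P j) (P (j+1))) := by
  obtain ⟨-, N, p, h0, hl, hm, hp⟩ := h
  refine ⟨N, fun j => p ⟨min j N, by omega⟩, by simpa using h0,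
    by simpa [Fin.last] using hl, ?_, ?_⟩
  · intro i j hij
    exact hm (by simp only [Fin.mk_le_mk]; omega)
  · intro j hj
    have e1 : (⟨min j N, by omega⟩ : Fin (N+1)) = (⟨j, hj⟩ : Fin N).castSucc := by
      simp only [Fin.castSucc, Fin.castAdd, Fin.castLE, Fin.mk.injEq]; omega
    have e2 : (⟨min (j+1) N, by omega⟩ : Fin (N+1)) = (⟨j, hj⟩ : Fin N).succ := by
      simp only [Fin.succ, Fin.mk.injEq]; omega
    convert hp ⟨j, hj⟩ using 2
    · exact congrArg p e1
    · exact congrArg p e2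

lemma partition_cover {a b : ℝ} {N : ℕ} {P : ℕ → ℝ} (h0 : P 0 = a) (hN : P N = b)
    (hm : Monotone P) (hab : a < b) {s : ℝ} (hs : s ∈ Icc a b) :
    ∃ j < N, s ∈ Icc (P j) (P (j+1)) := by
  classical
  have hN0 : N ≠ 0 := by rintro rfl; rw [h0] at hN; linarith
  set T := (Finset.range (N+1)).filter (fun j => P j ≤ s) with hT
  have h0T : 0 ∈ T := by simp [hT, h0, hs.1]
  obtain ⟨j₀, hj₀T, hmax⟩ := T.exists_max_image id ⟨0, h0T⟩
  simp only [hT, Finset.mem_filter, Finset.mem_range] at hj₀T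
  rcases lt_or_eq_of_le (Nat.lt_succ_iff.1 hj₀T.1) with hlt | heq
  · refine ⟨j₀, hlt, hj₀T.2, ?_⟩
    by_contra hcon
    push_neg at hcon
    have : j₀ + 1 ∈ T := by
      simp only [hT, Finset.mem_filter, Finset.mem_range]
      exact ⟨by omega, hcon.le⟩
    have := hmax _ this
    simp only [id] at this
    omega
  · refine ⟨N - 1, by omega, ?_, ?_⟩
    · have : P (N-1) ≤ P N := hm (by omega)
      have hsb : s = b := le_antisymm hs.2 (by rw [← hN, ← heq]; exact hj₀T.2)
      rw [hsb, ← hN]; linarith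
    · have : N - 1 + 1 = N := by omega
      rw [this, hN]; exact hs.2

lemma deriv_bound {γ : ℝ → ℝ × ℝ} {a b : ℝ} (h : PiecewiseC1On γ a b) (hab : a < b) :
    ∃ (E : Set ℝ) (C : ℝ), E.Finite ∧ 0 ≤ C ∧
      ∀ s ∈ Icc a b, s ∉ E → DifferentiableAt ℝ γ s ∧ ‖deriv γ s‖ ≤ C := by
  obtain ⟨N, P, h0, hN, hm, hp⟩ := exists_nat_partition h
  have key : ∀ j : ℕ, ∃ C, 0 ≤ C ∧ ∀ s ∈ Ioo (P j) (P (j+1)), j < N →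
      DifferentiableAt ℝ γ s ∧ ‖deriv γ s‖ ≤ C := by
    intro j
    by_cases hj : j < N ∧ P j < P (j+1)
    · obtain ⟨hjN, hlt⟩ := hj
      have hcd := hp j hjN
      have hu := uniqueDiffOn_Icc hlt
      have hcont := hcd.continuousOn_derivWithin hu le_rfl
      obtain ⟨C, hC⟩ := (isCompact_Icc).exists_bound_of_continuousOn hcont
      refine ⟨max C 0, le_max_right _ _, ?_⟩
      intro s hs _
      have hsm : Icc (P j) (P (j+1)) ∈ nhds s := Icc_mem_nhds hs.1 hs.2
      have hd : DifferentiableAt ℝ γ s :=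
        ((hcd.differentiableOn one_ne_zero) s (Ioo_subset_Icc_self hs)).differentiableAt hsm
      refine ⟨hd, ?_⟩
      have hb := hC s (Ioo_subset_Icc_self hs)
      rw [hd.derivWithin (hu s (Ioo_subset_Icc_self hs))] at hb
      exact hb.trans (le_max_left _ _)
    · refine ⟨0, le_rfl, ?_⟩
      intro s hs hjN
      exact absurd ⟨hjN, lt_trans hs.1 hs.2⟩ hj
  choose C hC0 hCb using key
  refine ⟨Set.range (fun j : Fin (N+1) => P j), ∑ j ∈ Finset.range N, C j,
    Set.finite_range _, Finset.sum_nonneg (fun j _ => hC0 j), ?_⟩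
  intro s hs hsE
  obtain ⟨j, hjN, hsj⟩ := partition_cover h0 hN hm hab hs
  have hso : s ∈ Ioo (P j) (P (j+1)) := by
    refine ⟨lt_of_le_of_ne hsj.1 ?_, lt_of_le_of_ne hsj.2 ?_⟩
    · intro hcon; exact hsE ⟨⟨j, by omega⟩, hcon⟩
    · intro hcon; exact hsE ⟨⟨j+1, by omega⟩, hcon.symm⟩
  obtain ⟨hd, hb⟩ := hCb j s hso hjN
  exact ⟨hd, hb.trans (Finset.single_le_sum (fun i _ => hC0 i) (Finset.mem_range.2 hjN))⟩

lemma integrable_comp {γ : ℝ → ℝ × ℝ} {a b : ℝ} (h : PiecewiseC1On γ a b) (hab : a < b)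
    (Φ : (ℝ × ℝ) → (ℝ × ℝ) → ℝ)
    (hΦ : Continuous fun pr : (ℝ × ℝ) × (ℝ × ℝ) => Φ pr.1 pr.2) :
    IntervalIntegrable (fun s => Φ (γ s) (deriv γ s)) volume a b := by
  obtain ⟨E, C, hE, hC0, hbd⟩ := deriv_bound h hab
  rw [intervalIntegrable_iff_integrableOn_Ioc_of_le hab.le]
  have hK1 : IsCompact (γ '' Icc a b) := (isCompact_Icc).image_of_continuousOn h.1
  have hK : IsCompact ((γ '' Icc a b) ×ˢ Metric.closedBall (0 : ℝ × ℝ) C) :=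
    hK1.prod (isCompact_closedBall _ _)
  obtain ⟨M, hM⟩ := hK.exists_bound_of_continuousOn hΦ.continuousOn
  have hmeas : AEStronglyMeasurable (fun s => Φ (γ s) (deriv γ s))
      (volume.restrict (Ioc a b)) := by
    have h1 : AEMeasurable γ (volume.restrict (Ioc a b)) :=
      (h.1.mono Ioc_subset_Icc_self).aemeasurable measurableSet_Ioc
    have h2 : AEMeasurable (deriv γ) (volume.restrict (Ioc a b)) :=
      (measurable_deriv γ).aemeasurable
    exact (hΦ.measurable.comp_aemeasurable (h1.prodMk h2)).aestronglyMeasurable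
  have hae : ∀ᵐ s ∂(volume.restrict (Ioc a b)), ‖Φ (γ s) (deriv γ s)‖ ≤ |M| := by
    have hEnull : ∀ᵐ s ∂(volume.restrict (Ioc a b)), s ∉ E :=
      ae_restrict_of_ae (measure_eq_zero_iff_ae_notMem.1 (hE.countable.measure_zero _))
    have hmem' : ∀ᵐ s ∂(volume.restrict (Ioc a b)), s ∈ Ioc a b :=
      ae_restrict_mem measurableSet_Ioc
    filter_upwards [hEnull, hmem'] with s hsE hsm
    have hsI : s ∈ Icc a b := Ioc_subset_Icc_self hsm
    obtain ⟨hd, hb⟩ := hbd s hsI hsE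
    have hmemK : (γ s, deriv γ s) ∈ (γ '' Icc a b) ×ˢ Metric.closedBall (0 : ℝ × ℝ) C :=
      ⟨mem_image_of_mem γ hsI, by simpa [Metric.mem_closedBall, dist_zero_right] using hb⟩
    exact le_trans (hM _ hmemK) (le_abs_self M)
  exact Integrable.mono' ((integrableOn_const_iff).2 (Or.inr measure_Ioc_lt_top)) hmeas hae

lemma ftc_piecewise {γ : ℝ → ℝ × ℝ} {a b : ℝ} (h : PiecewiseC1On γ a b)
    {g φ : ℝ → ℝ} (hg : ContinuousOn g (Icc a b))
    (hd : ∀ s ∈ Ioo a b, DifferentiableAt ℝ γ s → HasDerivAt g (φ s) s)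
    (hφ : IntervalIntegrable φ volume a b)
    {u v : ℝ} (hau : a ≤ u) (huv : u ≤ v) (hvb : v ≤ b) :
    ∫ s in u..v, φ s = g v - g u := by
  obtain ⟨N, P, h0, hN, hm, hp⟩ := exists_nat_partition h
  have hab : a ≤ b := le_trans hau (le_trans huv hvb)
  set r : ℕ → ℝ := fun j => min (max (P j) u) v with hr
  have hrm : Monotone r := fun i j hij =>
    min_le_min (max_le_max (hm hij) le_rfl) le_rfl
  have hru : ∀ j, u ≤ r j := fun j => le_min (le_max_right _ _) huv
  have hrv : ∀ j, r j ≤ v := fun j => min_le_right _ _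
  have hr0 : r 0 = u := by
    simp only [hr, h0]
    rw [max_eq_right hau, min_eq_left huv]
  have hrN : r N = v := by
    simp only [hr, hN]
    rw [max_eq_left (le_trans huv hvb), min_eq_right hvb]
  have hsub : ∀ j, Ioo (r j) (r (j+1)) ⊆ Ioo (P j) (P (j+1)) := by
    intro j s hs
    by_cases hu1 : u ≤ P (j+1)
    · by_cases hv1 : P j ≤ v
      · constructor
        · have : P j ≤ r j := le_min (le_max_left _ _) hv1
          exact lt_of_le_of_lt this hs.1
        · have : r (j+1) ≤ P (j+1) := by
            simp only [hr]
            exact le_trans (min_le_left _ _) (max_le le_rfl hu1)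
          exact lt_of_lt_of_le hs.2 this
      · push_neg at hv1
        exfalso
        have h1 : r j = v := by
          simp only [hr]; rw [min_eq_right]; exact le_trans hv1.le (le_max_left _ _)
        have h2 : r (j+1) = v := by
          simp only [hr]; rw [min_eq_right]
          exact le_trans (le_trans hv1.le (hm (by omega))) (le_max_left _ _)
        rw [h1, h2] at hs
        exact lt_irrefl _ (lt_trans hs.1 hs.2)
    · push_neg at hu1
      exfalso
      have h1 : r j = min u v := by
        simp only [hr]; congr 1
        rw [max_eq_right]
        exact le_trans (hm (by omega : j ≤ j+1)) hu1.le
      have h2 : r (j+1) = min u v := by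
        simp only [hr]; congr 1
        rw [max_eq_right hu1.le]
      rw [h1, h2] at hs
      exact lt_irrefl _ (lt_trans hs.1 hs.2)
  have hPa : ∀ j, a ≤ P j := fun j => h0 ▸ hm (Nat.zero_le j)
  have hPb : ∀ j, j ≤ N → P j ≤ b := fun j hj => hN ▸ hm hj
  have hint : ∀ j, IntervalIntegrable φ volume (r j) (r (j+1)) := by
    intro j
    apply hφ.mono_set
    rw [uIcc_of_le (hrm (by omega : j ≤ j+1)), uIcc_of_le hab]
    exact Icc_subset_Icc (le_trans hau (hru j)) (le_trans (hrv (j+1)) hvb)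
  have hpiece : ∀ j < N, ∫ s in (r j)..(r (j+1)), φ s = g (r (j+1)) - g (r j) := by
    intro j hj
    apply intervalIntegral.integral_eq_sub_of_hasDerivAt_of_le (hrm (by omega : j ≤ j+1))
    · exact hg.mono (Icc_subset_Icc (le_trans hau (hru j)) (le_trans (hrv (j+1)) hvb))
    · intro s hs
      have hsP : s ∈ Ioo (P j) (P (j+1)) := hsub j hs
      have hsIcc : Icc (P j) (P (j+1)) ∈ nhds s := Icc_mem_nhds hsP.1 hsP.2
      have hdiff : DifferentiableAt ℝ γ s :=
        (((hp j hj).differentiableOn one_ne_zero) s (Ioo_subset_Icc_self hsP)).differentiableAt hsIcc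
      apply hd s _ hdiff
      exact ⟨lt_of_le_of_lt (hPa j) hsP.1, lt_of_lt_of_le hsP.2 (hPb (j+1) hj)⟩
    · exact hint j
  calc ∫ s in u..v, φ s = ∫ s in (r 0)..(r N), φ s := by rw [hr0, hrN]
    _ = ∑ j ∈ Finset.range N, ∫ s in (r j)..(r (j+1)), φ s :=
        (intervalIntegral.sum_integral_adjacent_intervals (fun k _ => hint k)).symm
    _ = ∑ j ∈ Finset.range N, (g (r (j+1)) - g (r j)) :=
        Finset.sum_congr rfl (fun j hj => hpiece j (Finset.mem_range.1 hj))
    _ = g (r N) - g (r 0) := Finset.sum_range_sub (fun j => g (r j)) N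
    _ = g v - g u := by rw [hr0, hrN]



lemma La_nonneg (c : ℝ) (q v : ℝ × ℝ) : 0 ≤ La c q v := by
  unfold La
  nlinarith [Real.cos_le_one (2*Real.pi*q.1), sq_nonneg v.1, sq_nonneg (v.2 - c)]

lemma abs_sub_round_le_abs (x : ℝ) : |x - round x| ≤ |x| := by
  rcases le_or_gt (1/2) |x| with h | h
  · exact (abs_sub_round x).trans h
  · have h0 : round x = 0 := by
      rw [round_eq_zero_iff]
      obtain ⟨h1, h2⟩ := abs_lt.1 h
      constructor <;> simp <;> linarith
    simp [h0]

lemma round_dist_le (u : ℝ) (k : ℤ) : |u - round u| ≤ |u - k| := by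
  have h := abs_sub_round_le_abs (u - k)
  rw [round_sub_intCast] at h
  have : u - (k:ℝ) - ((round u : ℤ) - k : ℤ) = u - round u := by push_cast; ring
  rwa [this] at h

lemma rho_lower {x0 r : ℝ} (h : |r - x0| ≤ |x0 - round x0|/2) :
    |x0 - round x0|/2 ≤ |r - round r| := by
  have h1 : |x0 - round x0| ≤ |x0 - (round r : ℤ)| := round_dist_le x0 (round r)
  have h2 : |x0 - (round r:ℤ)| ≤ |x0 - r| + |r - (round r:ℤ)| := by
    calc |x0 - (round r:ℤ)| = |(x0 - r) + (r - (round r:ℤ))| := by ring_nf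
      _ ≤ |x0 - r| + |r - (round r:ℤ)| := abs_add_le _ _
  have h3 : |x0 - r| = |r - x0| := abs_sub_comm _ _
  linarith

lemma one_sub_cos_ge {δ u : ℝ} (h0 : 0 ≤ δ) (h2 : δ ≤ 1/2) (hu : δ ≤ |u - round u|) :
    1 - Real.cos (2*Real.pi*δ) ≤ 1 - Real.cos (2*Real.pi*u) := by
  have hcos : Real.cos (2*Real.pi*u) = Real.cos (2*Real.pi*(u - round u)) := by
    have h := Real.cos_add_int_mul_two_pi (2*Real.pi*(u - round u)) (round u)
    rw [← h]; congr 1; ring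
  have habs : Real.cos (2*Real.pi*(u - round u)) = Real.cos (2*Real.pi*|u - round u|) := by
    rcases abs_cases (u - round u) with ⟨h,_⟩ | ⟨h,_⟩
    · rw [h]
    · rw [h, show 2*Real.pi*(-(u - (round u:ℤ))) = -(2*Real.pi*(u - (round u:ℤ))) by ring,
        Real.cos_neg]
  have hle : Real.cos (2*Real.pi*|u - round u|) ≤ Real.cos (2*Real.pi*δ) := by
    apply Real.cos_le_cos_of_nonneg_of_le_pi (by positivity)
    · nlinarith [Real.pi_pos, abs_sub_round u]
    · nlinarith [Real.pi_pos]
  rw [hcos, habs]; linarith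

lemma amgm_w (V g : ℝ) (hV : 0 ≤ V) : Real.sqrt (2*V) * |g| ≤ (1/2)*g^2 + V := by
  nlinarith [Real.sq_sqrt (by linarith : (0:ℝ) ≤ 2*V), Real.sqrt_nonneg (2*V),
    sq_nonneg (|g| - Real.sqrt (2*V)), sq_abs g, abs_nonneg g]

def wA (u : ℝ) : ℝ := Real.sqrt (2 * (1 - Real.cos (2*Real.pi*u)))

def WAf (u : ℝ) : ℝ := ∫ r in (0:ℝ)..u, wA r

lemma wA_nonneg (u : ℝ) : 0 ≤ wA u := Real.sqrt_nonneg _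

lemma wA_cont : Continuous wA := by unfold wA; fun_prop

lemma WAf_hasDeriv (u : ℝ) : HasDerivAt WAf (wA u) u :=
  intervalIntegral.integral_hasDerivAt_right (wA_cont.intervalIntegrable _ _)
    (wA_cont.stronglyMeasurableAtFilter _ _) wA_cont.continuousAt

lemma WAf_cont : Continuous WAf :=
  continuous_iff_continuousAt.2 fun u => (WAf_hasDeriv u).continuousAt

lemma WAf_sub (a b : ℝ) : WAf b - WAf a = ∫ r in a..b, wA r := by
  unfold WAf
  rw [intervalIntegral.integral_interval_sub_left (wA_cont.intervalIntegrable 0 b)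
    (wA_cont.intervalIntegrable 0 a)]

lemma wA_lb {x0 r : ℝ} (h : |r - x0| ≤ |x0 - round x0|/2) (hd2 : |x0 - round x0| ≤ 1/2) :
    Real.sqrt (2*(1 - Real.cos (2*Real.pi*(|x0 - round x0|/2)))) ≤ wA r := by
  apply Real.sqrt_le_sqrt
  have := one_sub_cos_ge (δ := |x0 - round x0|/2) (u := r) (by positivity) (by linarith)
    (rho_lower h)
  linarith

lemma action_lower (c : ℝ) {t : ℝ} (ht : 1 ≤ t) {γ : ℝ → ℝ × ℝ} (hγ : PiecewiseC1On γ 0 t) :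
    min (1 - Real.cos (2*Real.pi*(|(γ 0).1 - (round ((γ 0).1) : ℤ)|/2)))
      (|(γ 0).1 - (round ((γ 0).1) : ℤ)|/2 *
        Real.sqrt (2*(1 - Real.cos (2*Real.pi*(|(γ 0).1 - (round ((γ 0).1) : ℤ)|/2)))))
      ≤ actionA c γ 0 t := by
  have ht0 : (0:ℝ) < t := lt_of_lt_of_le one_pos ht
  set x : ℝ → ℝ := fun s => (γ s).1 with hxdef
  set d : ℝ := |x 0 - (round (x 0) : ℤ)| with hddef
  set m : ℝ := 1 - Real.cos (2*Real.pi*(d/2)) with hmdef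
  have hd0 : 0 ≤ d := abs_nonneg _
  have hdhalf : d ≤ 1/2 := abs_sub_round _
  have hm0 : 0 ≤ m := by
    have := Real.cos_le_one (2*Real.pi*(d/2)); simp only [hmdef]; linarith
  have hLa : IntervalIntegrable (fun s => La c (γ s) (deriv γ s)) volume 0 t :=
    integrable_comp hγ ht0 (La c) (by unfold La; fun_prop)
  by_cases hcase : ∀ s ∈ Icc (0:ℝ) t, |x s - x 0| ≤ d/2
  · -- Case A : the curve stays close to its initial x, potential bounded below
    have hVx : IntervalIntegrable (fun s => 1 - Real.cos (2*Real.pi*(x s))) volume 0 t :=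
      integrable_comp hγ ht0 (fun p _ => 1 - Real.cos (2*Real.pi*p.1)) (by fun_prop)
    have h1 : ∫ s in (0:ℝ)..t, (1 - Real.cos (2*Real.pi*(x s))) ≤ actionA c γ 0 t := by
      have hsub := intervalIntegral.integral_sub hLa hVx
      have hnn : (0:ℝ) ≤ ∫ s in (0:ℝ)..t,
          (La c (γ s) (deriv γ s) - (1 - Real.cos (2*Real.pi*(x s)))) := by
        apply intervalIntegral.integral_nonneg ht0.le
        intro u hu
        unfold La
        simp only [hxdef]
        nlinarith [sq_nonneg (deriv γ u).1, sq_nonneg ((deriv γ u).2 - c)]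
      rw [hsub] at hnn
      unfold actionA
      linarith
    have h2 : m * t ≤ ∫ s in (0:ℝ)..t, (1 - Real.cos (2*Real.pi*(x s))) := by
      have hconst : ∫ s in (0:ℝ)..t, m = m * t := by
        simp [intervalIntegral.integral_const]; ring
      rw [← hconst]
      apply intervalIntegral.integral_mono_on ht0.le intervalIntegrable_const hVx
      intro s hs
      exact one_sub_cos_ge (by positivity) (by linarith) (rho_lower (hcase s hs))
    have : m ≤ actionA c γ 0 t := by nlinarith
    exact le_trans (min_le_left _ _) this
  · -- Case B : the curve moves at least d/2 in x
    push_neg at hcase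
    obtain ⟨sstar, hsmem, hsgt⟩ := hcase
    set φ : ℝ → ℝ := fun s => wA (x s) * (deriv γ s).1 with hφdef
    have hφi : IntervalIntegrable φ volume 0 t :=
      integrable_comp hγ ht0 (fun p v => wA p.1 * v.1) (by
        apply Continuous.mul
        · exact wA_cont.comp (continuous_fst.comp continuous_fst)
        · exact continuous_fst.comp continuous_snd)
    have hφai : IntervalIntegrable (fun s => |φ s|) volume 0 t := hφi.abs
    have hstep1 : ∫ s in (0:ℝ)..t, |φ s| ≤ actionA c γ 0 t := by
      have hsub := intervalIntegral.integral_sub hLa hφai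
      have hnn : (0:ℝ) ≤ ∫ s in (0:ℝ)..t, (La c (γ s) (deriv γ s) - |φ s|) := by
        apply intervalIntegral.integral_nonneg ht0.le
        intro u hu
        have hVu : (0:ℝ) ≤ 1 - Real.cos (2*Real.pi*(x u)) := by
          have := Real.cos_le_one (2*Real.pi*(x u)); linarith
        have habs : |φ u| = wA (x u) * |(deriv γ u).1| := by
          simp only [hφdef, abs_mul, abs_of_nonneg (wA_nonneg _)]
        have := amgm_w (1 - Real.cos (2*Real.pi*(x u))) ((deriv γ u).1) hVu
        unfold La
        simp only [hxdef] at habs this ⊢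
        rw [habs]
        unfold wA
        nlinarith [sq_nonneg ((deriv γ u).2 - c)]
      rw [hsub] at hnn
      unfold actionA
      linarith
    have hsplit : ∫ s in (0:ℝ)..sstar, |φ s| ≤ ∫ s in (0:ℝ)..t, |φ s| := by
      have hi1 : IntervalIntegrable (fun s => |φ s|) volume 0 sstar := by
        apply hφai.mono_set
        rw [uIcc_of_le hsmem.1, uIcc_of_le ht0.le]
        exact Icc_subset_Icc le_rfl hsmem.2
      have hi2 : IntervalIntegrable (fun s => |φ s|) volume sstar t := by
        apply hφai.mono_set
        rw [uIcc_of_le hsmem.2, uIcc_of_le ht0.le]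
        exact Icc_subset_Icc hsmem.1 le_rfl
      have hadd := intervalIntegral.integral_add_adjacent_intervals hi1 hi2
      have hnn2 : (0:ℝ) ≤ ∫ s in sstar..t, |φ s| :=
        intervalIntegral.integral_nonneg hsmem.2 (fun u _ => abs_nonneg _)
      linarith
    have hftc : ∫ s in (0:ℝ)..sstar, φ s = WAf (x sstar) - WAf (x 0) := by
      apply ftc_piecewise hγ (g := fun s => WAf (x s))
      · exact WAf_cont.comp_continuousOn (continuous_fst.comp_continuousOn hγ.1)
      · intro s hs hdiff
        have hx' : HasDerivAt x ((deriv γ s).1) s := (hdiff.hasDerivAt).fst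
        exact ((WAf_hasDeriv (x s)).comp s hx')
      · exact hφi
      · exact le_rfl
      · exact hsmem.1
      · exact hsmem.2
    have habs2 : |WAf (x sstar) - WAf (x 0)| ≤ ∫ s in (0:ℝ)..sstar, |φ s| := by
      rw [← hftc]
      exact intervalIntegral.abs_integral_le_integral_abs hsmem.1
    have hWlb : d/2 * Real.sqrt (2*m) ≤ |WAf (x sstar) - WAf (x 0)| := by
      have hsq : Real.sqrt (2*m) = Real.sqrt (2*(1 - Real.cos (2*Real.pi*(d/2)))) := by
        rw [hmdef]
      rcases le_or_gt (x 0) (x sstar) with hc | hc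
      · have hge : x 0 + d/2 ≤ x sstar := by
          have : |x sstar - x 0| = x sstar - x 0 := abs_of_nonneg (by linarith)
          linarith [hsgt, this ▸ hsgt]
        have hkey : d/2 * Real.sqrt (2*m) ≤ WAf (x sstar) - WAf (x 0) := by
          rw [WAf_sub]
          have hi1 : IntervalIntegrable wA volume (x 0) (x 0 + d/2) :=
            wA_cont.intervalIntegrable _ _
          have hi2 : IntervalIntegrable wA volume (x 0 + d/2) (x sstar) :=
            wA_cont.intervalIntegrable _ _
          have hadd := intervalIntegral.integral_add_adjacent_intervals hi1 hi2
          have hlow : d/2 * Real.sqrt (2*m) ≤ ∫ r in (x 0)..(x 0 + d/2), wA r := by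
            have hconst : ∫ r in (x 0)..(x 0 + d/2), Real.sqrt (2*m)
                = d/2 * Real.sqrt (2*m) := by
              simp [intervalIntegral.integral_const]
              ring
            rw [← hconst]
            apply intervalIntegral.integral_mono_on (by linarith) intervalIntegrable_const hi1
            intro r hr
            rw [hsq]
            apply wA_lb ?_ (hddef ▸ hdhalf)
            rw [← hddef, abs_le]
            exact ⟨by linarith [hr.1], by linarith [hr.2]⟩
          have hnn3 : (0:ℝ) ≤ ∫ r in (x 0 + d/2)..(x sstar), wA r :=
            intervalIntegral.integral_nonneg (by linarith) (fun u _ => wA_nonneg u)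
          linarith
        exact le_trans hkey (le_abs_self _)
      · have hge : x sstar ≤ x 0 - d/2 := by
          have : |x sstar - x 0| = -(x sstar - x 0) := abs_of_neg (by linarith)
          linarith [this ▸ hsgt]
        have hkey : d/2 * Real.sqrt (2*m) ≤ WAf (x 0) - WAf (x sstar) := by
          rw [WAf_sub]
          have hi1 : IntervalIntegrable wA volume (x sstar) (x 0 - d/2) :=
            wA_cont.intervalIntegrable _ _
          have hi2 : IntervalIntegrable wA volume (x 0 - d/2) (x 0) :=
            wA_cont.intervalIntegrable _ _
          have hadd := intervalIntegral.integral_add_adjacent_intervals hi1 hi2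
          have hlow : d/2 * Real.sqrt (2*m) ≤ ∫ r in (x 0 - d/2)..(x 0), wA r := by
            have hconst : ∫ r in (x 0 - d/2)..(x 0), Real.sqrt (2*m)
                = d/2 * Real.sqrt (2*m) := by
              simp [intervalIntegral.integral_const]
              ring
            rw [← hconst]
            apply intervalIntegral.integral_mono_on (by linarith) intervalIntegrable_const hi2
            intro r hr
            rw [hsq]
            apply wA_lb ?_ (hddef ▸ hdhalf)
            rw [← hddef, abs_le]
            exact ⟨by linarith [hr.1], by linarith [hr.2]⟩
          have hnn3 : (0:ℝ) ≤ ∫ r in (x sstar)..(x 0 - d/2), wA r :=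
            intervalIntegral.integral_nonneg (by linarith) (fun u _ => wA_nonneg u)
          linarith
        rw [abs_sub_comm]
        exact le_trans hkey (le_abs_self _)
    calc min m (d/2 * Real.sqrt (2*m)) ≤ d/2 * Real.sqrt (2*m) := min_le_right _ _
      _ ≤ |WAf (x sstar) - WAf (x 0)| := hWlb
      _ ≤ ∫ s in (0:ℝ)..sstar, |φ s| := habs2
      _ ≤ ∫ s in (0:ℝ)..t, |φ s| := hsplit
      _ ≤ actionA c γ 0 t := hstep1


lemma actionA_nonneg (c : ℝ) (γ : ℝ → ℝ × ℝ) {t : ℝ} (ht : 0 ≤ t) : 0 ≤ actionA c γ 0 t :=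
  intervalIntegral.integral_nonneg ht (fun u _ => La_nonneg c _ _)

lemma Fa_nonneg (c t : ℝ) (ht : 0 ≤ t) (q q' : T2) : 0 ≤ Fa c t q q' := by
  apply Real.sInf_nonneg
  rintro A ⟨γ, hγ, -, -, rfl⟩
  exact actionA_nonneg c γ ht

lemma Fa_bddBelow (c t : ℝ) (ht : 0 ≤ t) (q q' : T2) :
    BddBelow {A : ℝ | ∃ γ : ℝ → ℝ × ℝ, PiecewiseC1On γ 0 t ∧ p2 (γ 0) = q ∧
      p2 (γ t) = q' ∧ A = actionA c γ 0 t} := by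
  refine ⟨0, ?_⟩
  rintro A ⟨γ, hγ, -, -, rfl⟩
  exact actionA_nonneg c γ ht

lemma piecewiseC1On_of_contDiff {γ : ℝ → ℝ × ℝ} (h : ContDiff ℝ 1 γ) {a b : ℝ}
    (hab : a ≤ b) : PiecewiseC1On γ a b := by
  refine ⟨h.continuous.continuousOn, 1, ![a, b], rfl, rfl, ?_, fun i => h.contDiffOn⟩
  intro i j hij
  fin_cases i <;> fin_cases j <;> simp_all <;> omega

lemma exists_lift (z : AddCircle (1:ℝ)) : ∃ x : ℝ, (x : AddCircle (1:ℝ)) = z :=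
  Quotient.exists_rep z

lemma coe_add_int_AC (y : ℝ) (k : ℤ) :
    ((y + k : ℝ) : AddCircle (1:ℝ)) = (y : AddCircle (1:ℝ)) := by simp

lemma norm_AC (x : ℝ) : ‖(x : AddCircle (1:ℝ))‖ = |x - round x| := by
  rw [AddCircle.norm_eq]; norm_num

/-- Bounding an interval integral using a bound valid on the open interval. -/
lemma integral_le_of_Ioo_bound {f : ℝ → ℝ} {a b M : ℝ} (hab : a ≤ b)
    (hf : IntervalIntegrable f volume a b) (hM : ∀ s ∈ Ioo a b, f s ≤ M) :
    ∫ s in a..b, f s ≤ (b - a) * M := by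
  have hg : IntervalIntegrable (fun _ => M) volume a b := intervalIntegrable_const
  have hle : ∫ s in a..b, f s ≤ ∫ s in a..b, (fun _ => M) s := by
    apply intervalIntegral.integral_mono_ae_restrict hab hf hg
    have h1 : ∀ᵐ s ∂(volume.restrict (Icc a b)), s ∈ Icc a b :=
      ae_restrict_mem measurableSet_Icc
    have h2 : ∀ᵐ s ∂(volume.restrict (Icc a b)), s ∉ ({a, b} : Set ℝ) :=
      ae_restrict_of_ae (measure_eq_zero_iff_ae_notMem.1
        (((Set.finite_singleton _).insert _).countable.measure_zero _))
    filter_upwards [h1, h2] with s hs hab'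
    simp only [Set.mem_insert_iff, Set.mem_singleton_iff, not_or] at hab'
    exact hM s ⟨lt_of_le_of_ne hs.1 (Ne.symm hab'.1), lt_of_le_of_ne hs.2 hab'.2⟩
  calc ∫ s in a..b, f s ≤ ∫ s in a..b, (fun _ => M) s := hle
    _ = (b - a) * M := by simp [intervalIntegral.integral_const, smul_eq_mul]

/-- On `{0} × 𝕊¹`, `F_t` is at most `1/(8t)`. -/
lemma Fa_le_inv (c : ℝ) {t : ℝ} (ht : 0 < t) (yt : ℝ) :
    Fa c t (p2 (0, yt)) (p2 (0, yt)) ≤ 1/(8*t) := by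
  set k : ℤ := round (c*t) with hk
  set γ : ℝ → ℝ × ℝ := fun s => (0, yt + ((k:ℝ)/t)*s) with hγdef
  have hsm : ContDiff ℝ 1 γ := by
    apply ContDiff.prodMk contDiff_const
    exact contDiff_const.add (contDiff_const.mul contDiff_id)
  have hder : ∀ s, deriv γ s = (0, (k:ℝ)/t) := by
    intro s
    have h1 : HasDerivAt (fun s : ℝ => yt + ((k:ℝ)/t)*s) ((k:ℝ)/t) s := by
      simpa using ((hasDerivAt_id s).const_mul ((k:ℝ)/t)).const_add yt
    exact ((hasDerivAt_const s (0:ℝ)).prodMk h1).deriv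
  have hrnd : |c*t - k| ≤ 1/2 := abs_sub_round (c*t)
  have haction : actionA c γ 0 t ≤ 1/(8*t) := by
    have heq : actionA c γ 0 t = ∫ s in (0:ℝ)..t, (1/2)*((k:ℝ)/t - c)^2 := by
      unfold actionA
      apply intervalIntegral.integral_congr
      intro s _
      show La c (γ s) (deriv γ s) = 1/2*((k:ℝ)/t - c)^2
      rw [hder s]
      unfold La
      simp [hγdef, Real.cos_zero]
    rw [heq, intervalIntegral.integral_const]
    have hsq : ((k:ℝ)/t - c)^2 = ((k:ℝ) - c*t)^2/t^2 := by
      field_simp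
    have h2 : ((k:ℝ) - c*t)^2 ≤ 1/4 := by
      have h3 : |(k:ℝ) - c*t| ≤ 1/2 := by rw [abs_sub_comm]; exact hrnd
      nlinarith [abs_nonneg ((k:ℝ) - c*t), sq_abs ((k:ℝ) - c*t)]
    have hkey : (t - 0) • (1/2*(((k:ℝ) - c*t)^2/t^2)) = ((k:ℝ) - c*t)^2/(2*t) := by
      rw [smul_eq_mul]; field_simp; ring
    rw [hsq, hkey, div_le_div_iff₀ (by positivity) (by positivity)]
    nlinarith
  refine le_trans (csInf_le (Fa_bddBelow c t ht.le _ _) ?_) haction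
  refine ⟨γ, piecewiseC1On_of_contDiff hsm ht.le, ?_, ?_, rfl⟩
  · simp [hγdef, p2]
  · have hxt : γ t = (0, yt + (k:ℝ)) := by
      simp only [hγdef]
      rw [div_mul_cancel₀ _ (ne_of_gt ht)]
    rw [hxt]
    unfold p2
    simp

/-- Constant loops give membership. -/
lemma Fa_set_nonempty (c : ℝ) {t : ℝ} (ht : 0 < t) (q : T2) :
    {A : ℝ | ∃ γ : ℝ → ℝ × ℝ, PiecewiseC1On γ 0 t ∧ p2 (γ 0) = q ∧
      p2 (γ t) = q ∧ A = actionA c γ 0 t}.Nonempty := by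
  obtain ⟨x0, hx0⟩ := exists_lift q.1
  obtain ⟨y0, hy0⟩ := exists_lift q.2
  refine ⟨actionA c (fun _ => (x0, y0)) 0 t, fun _ => (x0, y0),
    piecewiseC1On_of_contDiff contDiff_const ht.le, ?_, ?_, rfl⟩ <;>
  · unfold p2
    exact Prod.ext hx0 hy0

/-- For every `q` and every `T`, some `t ≥ T` has `F_t(q,q)` uniformly bounded. -/
lemma Fa_loop_bound (c : ℝ) (q : T2) :
    ∃ Cb : ℝ, ∀ T : ℝ, ∃ t, 0 < t ∧ T ≤ t ∧ Fa c t q q ≤ Cb := by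
  obtain ⟨x0, hx0⟩ := exists_lift q.1
  obtain ⟨y0, hy0⟩ := exists_lift q.2
  refine ⟨x0^2 + 8, fun T => ?_⟩
  set t : ℝ := max T 3 with htdef
  have ht3 : (3:ℝ) ≤ t := le_max_right _ _
  have ht0 : (0:ℝ) < t := by linarith
  refine ⟨t, ht0, le_max_left _ _, ?_⟩
  set k : ℤ := round (c*t) with hk
  have hrnd : |c*t - k| ≤ 1/2 := abs_sub_round (c*t)
  have hksq : ((k:ℝ)/t - c)^2 ≤ 1/(4*t^2) := by
    have hsq : ((k:ℝ)/t - c)^2 = ((k:ℝ) - c*t)^2/t^2 := by field_simp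
    have h2 : ((k:ℝ) - c*t)^2 ≤ 1/4 := by
      have h3 : |(k:ℝ) - c*t| ≤ 1/2 := by rw [abs_sub_comm]; exact hrnd
      nlinarith [abs_nonneg ((k:ℝ) - c*t), sq_abs ((k:ℝ) - c*t)]
    rw [hsq, div_le_div_iff₀ (by positivity) (by positivity)]
    nlinarith [sq_nonneg t]
  have hks1 : ((k:ℝ)/t - c)^2 ≤ 1 := by
    have h4 : 1/(4*t^2) ≤ 1 := by
      rw [div_le_one (by positivity)]; nlinarith
    linarith
  set Y : ℝ → ℝ := fun s => y0 + ((k:ℝ)/t)*s with hY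
  set X : ℝ → ℝ := fun s =>
    if s ≤ 1 then x0*(1-s) else if s ≤ t-1 then 0 else x0*(s-(t-1)) with hX
  set γ : ℝ → ℝ × ℝ := fun s => (X s, Y s) with hγdef
  have hYcd : ContDiff ℝ 1 Y := contDiff_const.add (contDiff_const.mul contDiff_id)
  have hYc : Continuous Y := hYcd.continuous
  have hYd : ∀ s, HasDerivAt Y ((k:ℝ)/t) s := fun s => by
    rw [hY]; simpa using ((hasDerivAt_id s).const_mul ((k:ℝ)/t)).const_add y0
  have hXinner : Continuous (fun s : ℝ => if s ≤ t-1 then (0:ℝ) else x0*(s-(t-1))) := by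
    apply Continuous.if_le continuous_const (by fun_prop) continuous_id continuous_const
    intro s hs
    have hs' : s = t-1 := hs
    rw [hs']; ring
  have hXc : Continuous X := by
    apply Continuous.if_le (by fun_prop) hXinner continuous_id continuous_const
    intro s hs
    have h1t : (1:ℝ) ≤ t - 1 := by linarith
    have hs' : s = 1 := hs
    rw [hs', if_pos h1t]
    ring
  have hγc : Continuous γ := hXc.prodMk hYc
  have hX1 : ∀ s ∈ Icc (0:ℝ) 1, X s = x0*(1-s) := by
    intro s hs; simp only [hX]; rw [if_pos hs.2]
  have hX2 : ∀ s ∈ Icc (1:ℝ) (t-1), X s = 0 := by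
    intro s hs
    simp only [hX]
    by_cases h1 : s ≤ 1
    · have hs1 : s = 1 := le_antisymm h1 hs.1
      rw [if_pos h1, hs1]; ring
    · rw [if_neg h1, if_pos hs.2]
  have hX3 : ∀ s ∈ Icc (t-1) t, X s = x0*(s-(t-1)) := by
    intro s hs
    simp only [hX]
    have h1 : ¬ s ≤ 1 := by push_neg; linarith [hs.1]
    rw [if_neg h1]
    by_cases h2 : s ≤ t-1
    · have hs1 : s = t-1 := le_antisymm h2 hs.1
      rw [if_pos h2, hs1]; ring
    · rw [if_neg h2]
  have hpc : PiecewiseC1On γ 0 t := by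
    refine ⟨hγc.continuousOn, 3, ![0, 1, t-1, t], rfl, rfl, ?_, ?_⟩
    · rw [Fin.monotone_iff_le_succ]
      intro i
      fin_cases i
      · show (0:ℝ) ≤ 1; norm_num
      · show (1:ℝ) ≤ t-1; linarith
      · show (t-1:ℝ) ≤ t; linarith
    · intro i
      fin_cases i
      · show ContDiffOn ℝ 1 γ (Icc 0 1)
        apply ContDiffOn.congr (f := fun s => (x0*(1-s), Y s))
        · exact ((contDiff_const.mul (contDiff_const.sub contDiff_id)).prodMk hYcd).contDiffOn
        · intro s hs
          simp only [hγdef]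
          rw [hX1 s hs]
      · show ContDiffOn ℝ 1 γ (Icc 1 (t-1))
        apply ContDiffOn.congr (f := fun s => ((0:ℝ), Y s))
        · exact (contDiff_const.prodMk hYcd).contDiffOn
        · intro s hs
          simp only [hγdef]
          rw [hX2 s hs]
      · show ContDiffOn ℝ 1 γ (Icc (t-1) t)
        apply ContDiffOn.congr (f := fun s => (x0*(s-(t-1)), Y s))
        · exact ((contDiff_const.mul (contDiff_id.sub contDiff_const)).prodMk hYcd).contDiffOn
        · intro s hs
          simp only [hγdef]
          rw [hX3 s hs]
  -- integrability on pieces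
  have hLa : IntervalIntegrable (fun s => La c (γ s) (deriv γ s)) volume 0 t :=
    integrable_comp hpc ht0 (La c) (by unfold La; fun_prop)
  have hsub1 : IntervalIntegrable (fun s => La c (γ s) (deriv γ s)) volume 0 1 := by
    apply hLa.mono_set
    rw [uIcc_of_le (by norm_num : (0:ℝ) ≤ 1), uIcc_of_le ht0.le]
    exact Icc_subset_Icc le_rfl (by linarith)
  have hsub2 : IntervalIntegrable (fun s => La c (γ s) (deriv γ s)) volume 1 (t-1) := by
    apply hLa.mono_set
    rw [uIcc_of_le (by linarith : (1:ℝ) ≤ t-1), uIcc_of_le ht0.le]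
    exact Icc_subset_Icc (by norm_num) (by linarith)
  have hsub3 : IntervalIntegrable (fun s => La c (γ s) (deriv γ s)) volume (t-1) t := by
    apply hLa.mono_set
    rw [uIcc_of_le (by linarith : t-1 ≤ t), uIcc_of_le ht0.le]
    exact Icc_subset_Icc (by linarith) le_rfl
  have hsub12 : IntervalIntegrable (fun s => La c (γ s) (deriv γ s)) volume 0 (t-1) := by
    apply hLa.mono_set
    rw [uIcc_of_le (by linarith : (0:ℝ) ≤ t-1), uIcc_of_le ht0.le]
    exact Icc_subset_Icc le_rfl (by linarith)
  -- derivatives on open pieces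
  have hd1 : ∀ s ∈ Ioo (0:ℝ) 1, deriv γ s = (x0 * -1, (k:ℝ)/t) := by
    intro s hs
    have hev : γ =ᶠ[nhds s] (fun u => (x0*(1-u), Y u)) := by
      filter_upwards [Ioo_mem_nhds hs.1 hs.2] with u hu
      simp only [hγdef]
      rw [hX1 u (Ioo_subset_Icc_self hu)]
    rw [Filter.EventuallyEq.deriv_eq hev]
    exact ((((hasDerivAt_id s).const_sub 1).const_mul x0).prodMk (hYd s)).deriv
  have hd2 : ∀ s ∈ Ioo (1:ℝ) (t-1), deriv γ s = (0, (k:ℝ)/t) := by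
    intro s hs
    have hev : γ =ᶠ[nhds s] (fun u => ((0:ℝ), Y u)) := by
      filter_upwards [Ioo_mem_nhds hs.1 hs.2] with u hu
      simp only [hγdef]
      rw [hX2 u (Ioo_subset_Icc_self hu)]
    rw [Filter.EventuallyEq.deriv_eq hev]
    exact ((hasDerivAt_const s (0:ℝ)).prodMk (hYd s)).deriv
  have hd3 : ∀ s ∈ Ioo (t-1) t, deriv γ s = (x0 * 1, (k:ℝ)/t) := by
    intro s hs
    have hev : γ =ᶠ[nhds s] (fun u => (x0*(u-(t-1)), Y u)) := by
      filter_upwards [Ioo_mem_nhds hs.1 hs.2] with u hu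
      simp only [hγdef]
      rw [hX3 u (Ioo_subset_Icc_self hu)]
    rw [Filter.EventuallyEq.deriv_eq hev]
    exact ((((hasDerivAt_id s).sub_const (t-1)).const_mul x0).prodMk (hYd s)).deriv
  -- piecewise bounds
  have hb1 : ∫ s in (0:ℝ)..1, La c (γ s) (deriv γ s) ≤ (1-0) * (x0^2/2 + 7/2) := by
    apply integral_le_of_Ioo_bound (by norm_num) hsub1
    intro s hs
    rw [hd1 s hs]
    unfold La
    simp only [hγdef]
    nlinarith [Real.neg_one_le_cos (2*Real.pi*(X s)), hks1]
  have hb2 : ∫ s in (1:ℝ)..(t-1), La c (γ s) (deriv γ s) ≤ (t-1-1) * (1/(8*t^2)) := by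
    apply integral_le_of_Ioo_bound (by linarith) hsub2
    intro s hs
    rw [hd2 s hs]
    unfold La
    simp only [hγdef]
    rw [hX2 s (Ioo_subset_Icc_self hs)]
    norm_num
    have e : 1/(4*t^2) = (t^2)⁻¹*(1/4) := by ring
    rw [e] at hksq
    linarith
  have hb3 : ∫ s in (t-1)..t, La c (γ s) (deriv γ s) ≤ (t-(t-1)) * (x0^2/2 + 7/2) := by
    apply integral_le_of_Ioo_bound (by linarith) hsub3
    intro s hs
    rw [hd3 s hs]
    unfold La
    simp only [hγdef]
    nlinarith [Real.neg_one_le_cos (2*Real.pi*(X s)), hks1]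
  have hsplit : actionA c γ 0 t = (∫ s in (0:ℝ)..1, La c (γ s) (deriv γ s))
      + (∫ s in (1:ℝ)..(t-1), La c (γ s) (deriv γ s))
      + (∫ s in (t-1)..t, La c (γ s) (deriv γ s)) := by
    unfold actionA
    rw [intervalIntegral.integral_add_adjacent_intervals hsub1 hsub2,
      intervalIntegral.integral_add_adjacent_intervals hsub12 hsub3]
  have haction : actionA c γ 0 t ≤ x0^2 + 8 := by
    rw [hsplit]
    have hmid : (t-1-1) * (1/(8*t^2)) ≤ 1 := by
      rw [mul_one_div, div_le_one (by positivity)]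
      nlinarith [ht3, ht0, sq_nonneg (t-3)]
    linarith
  have hstart : p2 (γ 0) = q := by
    have hγ0 : γ 0 = (x0, y0) := by
      simp only [hγdef, hY]
      have h0m : (0:ℝ) ∈ Icc (0:ℝ) 1 := by norm_num
      rw [hX1 0 h0m]
      norm_num
    rw [hγ0]
    exact Prod.ext hx0 hy0
  have hend : p2 (γ t) = q := by
    have hXt : X t = x0 := by
      rw [hX3 t ⟨by linarith, le_rfl⟩]; ring
    have hYt : Y t = y0 + (k:ℝ) := by
      simp only [hY]
      rw [div_mul_cancel₀ _ (ne_of_gt ht0)]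
    have hγt : γ t = (x0, y0 + (k:ℝ)) := by
      simp only [hγdef]
      rw [hXt, hYt]
    rw [hγt]
    refine Prod.ext hx0 ?_
    show ((y0 + (k:ℝ) : ℝ) : AddCircle (1:ℝ)) = q.2
    rw [coe_add_int_AC, hy0]
  refine le_trans (csInf_le (Fa_bddBelow c t ht0.le _ _) ⟨γ, hpc, hstart, hend, rfl⟩) haction

end Aubry


/-- For `L_a(x,y,ẋ,ẏ) = ẋ²/2 + 1 − cos(2πx) + (ẏ−c)²/2` on `𝕋²`,
the projected Aubry set equals `{0} × 𝕊¹`: `h(q,q) = 0` iff `q = π(0,ỹ)` for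
some `ỹ ∈ ℝ`. -/
theorem aubry_set_eq_circle (c : ℝ) (q : T2) :
    hA c q q = 0 ↔ q ∈ circ0 := by
  constructor
  · -- if the Peierls barrier vanishes, q lies on the circle {0} × 𝕊¹
    intro h
    by_contra hq
    have hq1 : q.1 ≠ 0 := by
      intro h1
      apply hq
      obtain ⟨y0, hy0⟩ := Aubry.exists_lift q.2
      exact ⟨y0, by
        apply Prod.ext
        · rw [h1]; rfl
        · exact hy0.symm⟩
    set d : ℝ := ‖q.1‖ with hddef
    have hd0 : 0 < d := norm_pos_iff.2 hq1
    have hdhalf : d ≤ 1/2 := by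
      obtain ⟨x0, hx0⟩ := Aubry.exists_lift q.1
      rw [hddef, ← hx0, Aubry.norm_AC]
      exact abs_sub_round x0
    set m : ℝ := 1 - Real.cos (2*Real.pi*(d/2)) with hmdef
    have hm0 : 0 < m := by
      have hcc : Real.cos (2*Real.pi*(d/2)) < Real.cos 0 := by
        apply Real.cos_lt_cos_of_nonneg_of_le_pi le_rfl
        · nlinarith [Real.pi_pos]
        · positivity
      rw [Real.cos_zero] at hcc
      rw [hmdef]; linarith
    set ε : ℝ := min m (d/2 * Real.sqrt (2*m)) with hεdef
    have hε : 0 < ε := lt_min hm0 (by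
      apply mul_pos (by linarith)
      exact Real.sqrt_pos.2 (by linarith))
    have hFa : ∀ t : ℝ, 1 ≤ t → ε ≤ Fa c t q q := by
      intro t ht
      have ht0 : (0:ℝ) < t := by linarith
      apply le_csInf (Aubry.Fa_set_nonempty c ht0 q)
      rintro A ⟨γ, hγ, hst, hend, rfl⟩
      have hx0 : (((γ 0).1 : ℝ) : AddCircle (1:ℝ)) = q.1 := by
        rw [← hst]; rfl
      have hdx : |(γ 0).1 - (round ((γ 0).1) : ℤ)| = d := by
        rw [hddef, ← hx0, Aubry.norm_AC]
      have hlow := Aubry.action_lower c ht hγ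
      rw [hdx] at hlow
      exact le_trans (le_of_eq (by rw [hεdef, hmdef])) hlow
    obtain ⟨Cb, hCb⟩ := Aubry.Fa_loop_bound c q
    have hbdd : BddAbove {r : ℝ | ∃ T : ℝ,
        r = sInf {A : ℝ | ∃ t : ℝ, 0 < t ∧ T ≤ t ∧ A = Fa c t q q}} := by
      refine ⟨Cb, ?_⟩
      rintro r ⟨T, rfl⟩
      obtain ⟨t, ht0, hTt, hFt⟩ := hCb T
      refine le_trans (csInf_le ⟨0, ?_⟩ ⟨t, ht0, hTt, rfl⟩) hFt
      rintro A ⟨t', ht', -, rfl⟩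
      exact Aubry.Fa_nonneg c t' ht'.le q q
    have hmem : sInf {A : ℝ | ∃ t : ℝ, 0 < t ∧ (1:ℝ) ≤ t ∧ A = Fa c t q q} ∈
        {r : ℝ | ∃ T : ℝ, r = sInf {A : ℝ | ∃ t : ℝ, 0 < t ∧ T ≤ t ∧ A = Fa c t q q}} :=
      ⟨1, rfl⟩
    have hge : ε ≤ sInf {A : ℝ | ∃ t : ℝ, 0 < t ∧ (1:ℝ) ≤ t ∧ A = Fa c t q q} := by
      refine le_csInf ⟨Fa c 1 q q, ⟨1, one_pos, le_rfl, rfl⟩⟩ ?_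
      rintro A ⟨t, ht0, h1t, rfl⟩
      exact hFa t h1t
    have hfinal : ε ≤ hA c q q := le_trans hge (le_csSup hbdd hmem)
    rw [h] at hfinal
    linarith
  · -- on the circle {0} × 𝕊¹ the Peierls barrier vanishes
    rintro ⟨yt, rfl⟩
    have hIT : ∀ T : ℝ, sInf {A : ℝ | ∃ t : ℝ, 0 < t ∧ T ≤ t ∧
        A = Fa c t (p2 (0, yt)) (p2 (0, yt))} = 0 := by
      intro T
      have hbb : BddBelow {A : ℝ | ∃ t : ℝ, 0 < t ∧ T ≤ t ∧
          A = Fa c t (p2 (0, yt)) (p2 (0, yt))} := by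
        refine ⟨0, ?_⟩
        rintro A ⟨t', ht', -, rfl⟩
        exact Aubry.Fa_nonneg c t' ht'.le _ _
      apply le_antisymm
      · by_contra hlt
        push_neg at hlt
        set I := sInf {A : ℝ | ∃ t : ℝ, 0 < t ∧ T ≤ t ∧
          A = Fa c t (p2 (0, yt)) (p2 (0, yt))} with hIdef
        have key : ∀ η : ℝ, 0 < η → I ≤ η := by
          intro η hη
          set t0 : ℝ := max T (1/(8*η) + 1) with ht0def
          have ht0p : 0 < t0 := lt_of_lt_of_le (by positivity) (le_max_right _ _)
          have hI1 : I ≤ Fa c t0 (p2 (0, yt)) (p2 (0, yt)) :=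
            csInf_le hbb ⟨t0, ht0p, le_max_left _ _, rfl⟩
          refine le_trans (hI1.trans (Aubry.Fa_le_inv c ht0p yt)) ?_
          have h1 : 1/(8*η) + 1 ≤ t0 := le_max_right _ _
          rw [div_le_iff₀ (by positivity)]
          have h2 : 1/(8*η) ≤ t0 := by linarith
          rw [div_le_iff₀ (by positivity)] at h2
          nlinarith
        have := key (I/2) (by linarith)
        linarith
      · apply Real.sInf_nonneg
        rintro A ⟨t', ht', -, rfl⟩
        exact Aubry.Fa_nonneg c t' ht'.le _ _
    unfold hA
    have hset : {r : ℝ | ∃ T : ℝ, r = sInf {A : ℝ | ∃ t : ℝ, 0 < t ∧ T ≤ t ∧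
        A = Fa c t (p2 (0, yt)) (p2 (0, yt))}} = {0} := by
      ext r
      simp only [Set.mem_setOf_eq, Set.mem_singleton_iff]
      constructor
      · rintro ⟨T, rfl⟩
        exact hIT T
      · intro hr
        exact ⟨0, hr.trans (hIT 0).symm⟩
    rw [hset, csSup_singleton]
end
end

section
/- For the autonomous Lagrangian L_a(x,y,ẋ,ẏ) = (1/2)ẋ² + 1 − cos(2πx) + (1/2)(ẏ−c)² on 𝕋² = ℝ²/ℤ², for every u ∈ C(𝕋²,ℝ), every ỹ ∈ ℝ, and every t > 0, one has T_t u(π(0,ỹ)) ≤ (min_{q ∈ {0}×𝕊¹} u(q)) + 1/(2t). -/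
open Set Filter MeasureTheory

noncomputable section

private lemma La_nonneg' (c : ℝ) (q v : ℝ × ℝ) : 0 ≤ La c q v := by
  have h := Real.cos_le_one (2 * Real.pi * q.1)
  have h1 := sq_nonneg v.1
  have h2 := sq_nonneg (v.2 - c)
  unfold La; nlinarith

private lemma actionA_nonneg' (c : ℝ) (γ : ℝ → ℝ × ℝ) (t : ℝ) (ht : 0 ≤ t) :
    0 ≤ actionA c γ 0 t := by
  unfold actionA
  exact intervalIntegral.integral_nonneg ht fun s _ => La_nonneg' c _ _

private lemma circ0_compact' : IsCompact circ0 := by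
  haveI : Fact ((0:ℝ) < 1) := ⟨one_pos⟩
  have : circ0 = (fun y : AddCircle (1:ℝ) => (((0:ℝ) : AddCircle (1:ℝ)), y)) '' Set.univ := by
    ext q
    constructor
    · rintro ⟨y, rfl⟩; exact ⟨(y : AddCircle (1:ℝ)), trivial, rfl⟩
    · rintro ⟨y, -, rfl⟩
      obtain ⟨yr, rfl⟩ := QuotientAddGroup.mk_surjective y
      exact ⟨yr, rfl⟩
  rw [this]
  exact isCompact_univ.image (by continuity)

/-- For `L_a` on `𝕋²`, every continuous `u`, every `ỹ ∈ ℝ` and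
every `t > 0`, `T_t u (π(0,ỹ)) ≤ min_{{0}×𝕊¹} u + 1/(2t)`. -/
theorem laxOleinik_upper_bound_on_circle (c : ℝ) (u : T2 → ℝ) (hu : Continuous u)
    (yt : ℝ) (t : ℝ) (ht : 0 < t) :
    Tlo c t u (p2 (0, yt)) ≤ sInf (u '' circ0) + 1 / (2 * t) := by
  haveI : Fact ((0:ℝ) < 1) := ⟨one_pos⟩
  -- a minimizer of u on circ0
  obtain ⟨qs, hqs, hmin⟩ := circ0_compact'.exists_isMinOn ⟨p2 (0, 0), 0, rfl⟩
    (hu.continuousOn)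
  obtain ⟨ys, hys⟩ := hqs
  -- choose starting point
  set k : ℤ := ⌊yt - c * t - ys⌋ with hk
  set y0 : ℝ := ys + (k : ℝ) with hy0
  set v : ℝ := (yt - y0) / t with hv
  set γ : ℝ → ℝ × ℝ := fun s => ((0:ℝ), y0 + v * s) with hγ
  have hderiv : ∀ s : ℝ, deriv γ s = (0, v) := by
    intro s
    have : HasDerivAt γ (0, v) s := by
      apply HasDerivAt.prodMk (hasDerivAt_const s 0)
      simpa using ((hasDerivAt_id s).const_mul v).const_add y0
    exact this.deriv
  have hcd : ContDiff ℝ 1 γ :=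
    ContDiff.prodMk contDiff_const (contDiff_const.add (contDiff_const.mul contDiff_id))
  -- piecewise C1
  have hpc1 : PiecewiseC1On γ 0 t := by
    refine ⟨hcd.continuous.continuousOn, 1, ![0, t], rfl, rfl, ?_, fun i => hcd.contDiffOn⟩
    intro i j hij
    fin_cases i <;> fin_cases j <;> simp_all [ht.le]
  -- endpoint
  have hend : p2 (γ t) = p2 (0, yt) := by
    have : y0 + v * t = yt := by
      rw [hv, div_mul_cancel₀ _ ht.ne']; ring
    simp [hγ, p2, this]
  -- start point
  have hstart : p2 (γ 0) = qs := by
    have hz : ((y0 : ℝ) : AddCircle (1:ℝ)) = ((ys : ℝ) : AddCircle (1:ℝ)) := by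
      have h0 : (((k:ℝ)) : AddCircle (1:ℝ)) = 0 := by
        rw [AddCircle.coe_eq_zero_iff]; exact ⟨k, by simp⟩
      rw [hy0, QuotientAddGroup.mk_add, h0, add_zero]
    simp only [hγ, p2, mul_zero, add_zero]
    rw [hys]; simp [p2, hz]
  -- action value
  have hcos : Real.cos (2 * Real.pi * (0:ℝ)) = 1 := by simp
  have haction : actionA c γ 0 t = (1 / 2) * (v - c) ^ 2 * t := by
    unfold actionA
    have : ∀ s : ℝ, La c (γ s) (deriv γ s) = (1 / 2) * (v - c) ^ 2 := by
      intro s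
      rw [hderiv s]
      simp [La, hγ, hcos]
    simp only [this]
    rw [intervalIntegral.integral_const]
    ring_nf
  -- action bound
  have hθ1 : (0:ℝ) ≤ yt - c * t - y0 := by
    have := Int.floor_le (yt - c * t - ys)
    simp only [hy0, ← hk]; linarith
  have hθ2 : yt - c * t - y0 ≤ 1 := by
    have := Int.lt_floor_add_one (yt - c * t - ys)
    simp only [hy0, ← hk]; linarith
  have hvt : (v - c) * t = yt - c * t - y0 := by
    rw [hv, sub_mul, div_mul_cancel₀ _ ht.ne']; ring
  have hbound : actionA c γ 0 t ≤ 1 / (2 * t) := by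
    rw [haction]
    have h1 : ((v - c) * t) ^ 2 ≤ 1 := by
      rw [hvt]; nlinarith
    rw [le_div_iff₀ (by positivity : (0:ℝ) < 2 * t)]
    nlinarith [h1]
  -- membership and sInf bounds
  have hmem : u (p2 (γ 0)) + actionA c γ 0 t ∈
      {A : ℝ | ∃ γ' : ℝ → ℝ × ℝ, PiecewiseC1On γ' 0 t ∧ p2 (γ' t) = p2 (0, yt) ∧
        A = u (p2 (γ' 0)) + actionA c γ' 0 t} := ⟨γ, hpc1, hend, rfl⟩
  have hbdd : BddBelow {A : ℝ | ∃ γ' : ℝ → ℝ × ℝ, PiecewiseC1On γ' 0 t ∧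
      p2 (γ' t) = p2 (0, yt) ∧ A = u (p2 (γ' 0)) + actionA c γ' 0 t} := by
    obtain ⟨qm, -, hqm⟩ := isCompact_univ.exists_isMinOn (Set.univ_nonempty)
      (hu.continuousOn)
    refine ⟨u qm, ?_⟩
    rintro A ⟨γ', hp, -, rfl⟩
    have := actionA_nonneg' c γ' t ht.le
    have := hqm (Set.mem_univ (p2 (γ' 0)))
    simp only [Set.mem_setOf_eq] at *
    linarith
  have hTlo : Tlo c t u (p2 (0, yt)) ≤ u (p2 (γ 0)) + actionA c γ 0 t :=
    csInf_le hbdd hmem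
  have husqs : u qs ≤ sInf (u '' circ0) := by
    have hne : (u '' circ0).Nonempty := ⟨u qs, Set.mem_image_of_mem u ⟨ys, hys⟩⟩
    apply le_csInf hne
    rintro b ⟨q, hq, rfl⟩
    exact isMinOn_iff.mp hmin q hq
  calc Tlo c t u (p2 (0, yt)) ≤ u (p2 (γ 0)) + actionA c γ 0 t := hTlo
    _ ≤ u qs + 1 / (2 * t) := by rw [hstart]; linarith
    _ ≤ sInf (u '' circ0) + 1 / (2 * t) := by linarith
end
end

section
/- For the autonomous Lagrangian L_a(x,y,ẋ,ẏ) = (1/2)ẋ² + 1 − cos(2πx) + (1/2)(ẏ−c)² on 𝕋² = ℝ²/ℤ², let u ∈ C(𝕋²,ℝ) be independent of the first coordinate (u(π(x̃,ỹ)) depends only on ỹ mod 1). Let t > 0, let q = π(0,ỹ₀) ∈ {0}×𝕊¹, and let γ = (γ₁,γ₂) : [0,t] → ℝ² be a continuous piecewise C¹ curve with π(γ(t)) = q that attains the infimum, i.e. u(π(γ(0))) + ∫_0^t L_a(γ(s),γ̇(s)) ds = T_t u(q). Then γ₁ is constant with value in ℤ; in particular π(γ(s)) ∈ {0}×𝕊¹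 for all s ∈ [0,t]. -/
open Set Filter MeasureTheory

noncomputable section

lemma contOn_eq_zero_of_ae {g : ℝ → ℝ} {t : ℝ} (ht : 0 < t)
    (hg : ContinuousOn g (Set.Icc 0 t))
    (hae : ∀ᵐ s ∂(volume.restrict (Set.Ioc (0:ℝ) t)), g s = 0) :
    ∀ s ∈ Set.Icc (0:ℝ) t, g s = 0 := by
  intro s0 hs0
  by_contra hne
  have hev : {x : ℝ | g x ≠ 0} ∈ nhdsWithin s0 (Set.Icc (0:ℝ) t) := by
    have h1 : {y : ℝ | y ≠ 0} ∈ nhds (g s0) := isOpen_ne.mem_nhds hne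
    exact hg s0 hs0 h1
  obtain ⟨δ, hδ, hball⟩ := Metric.mem_nhdsWithin_iff.1 hev
  obtain ⟨a, b, hab, hsub⟩ : ∃ a b : ℝ, a < b ∧
      Set.Ioc a b ⊆ (Metric.ball s0 δ ∩ Set.Icc 0 t) ∩ Set.Ioc 0 t := by
    rcases lt_or_eq_of_le hs0.2 with hlt | heq
    · refine ⟨s0, min t (s0 + δ/2), lt_min hlt (by linarith), fun x hx => ?_⟩
      have hx1 : s0 < x := hx.1
      have hxt : x ≤ t := hx.2.trans (min_le_left _ _)
      have hxd : x ≤ s0 + δ/2 := hx.2.trans (min_le_right _ _)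
      have h0x : 0 < x := lt_of_le_of_lt hs0.1 hx1
      refine ⟨⟨?_, h0x.le, hxt⟩, h0x, hxt⟩
      rw [Metric.mem_ball, Real.dist_eq, abs_lt]
      constructor <;> linarith
    · refine ⟨max 0 (t - δ/2), t, max_lt ht (by linarith), fun x hx => ?_⟩
      have hx0 : 0 < x := lt_of_le_of_lt (le_max_left _ _) hx.1
      have hxd : t - δ/2 < x := lt_of_le_of_lt (le_max_right _ _) hx.1
      have hxt : x ≤ t := hx.2
      refine ⟨⟨?_, hx0.le, hxt⟩, hx0, hxt⟩
      rw [Metric.mem_ball, Real.dist_eq, heq, abs_lt]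
      constructor <;> linarith
  have hzero : volume.restrict (Set.Ioc (0:ℝ) t) (Set.Ioc a b) = 0 := by
    refine measure_mono_null (fun x hx => ?_) (ae_iff.mp hae)
    exact hball ⟨(hsub hx).1.1, (hsub hx).1.2⟩
  rw [Measure.restrict_apply measurableSet_Ioc,
    Set.inter_eq_self_of_subset_left (fun x hx => (hsub hx).2), Real.volume_Ioc] at hzero
  simp only [ENNReal.ofReal_eq_zero] at hzero
  linarith

/-- For `L_a` on `𝕋²` and continuous `u` independent of the first
coordinate, any curve attaining the infimum in `T_t u (π(0,ỹ₀))` has constant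
first coordinate with value in `ℤ`; in particular it stays in `{0} × 𝕊¹`. -/
theorem minimizer_stays_on_circle (c : ℝ) (u : T2 → ℝ) (hu : Continuous u)
    (hind : ∀ xt xt' yt : ℝ, u (p2 (xt, yt)) = u (p2 (xt', yt)))
    (t : ℝ) (ht : 0 < t) (yt0 : ℝ) (γ : ℝ → ℝ × ℝ)
    (hγ : PiecewiseC1On γ 0 t) (hend : p2 (γ t) = p2 (0, yt0))
    (hmin : u (p2 (γ 0)) + actionA c γ 0 t = Tlo c t u (p2 (0, yt0))) :
    (∃ k : ℤ, ∀ s ∈ Set.Icc (0 : ℝ) t, (γ s).1 = (k : ℝ)) ∧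
    (∀ s ∈ Set.Icc (0 : ℝ) t, p2 (γ s) ∈ circ0) := by
  classical
  obtain ⟨hcont, N, p, hp0, hpl, hmono, hC1⟩ := hγ
  -- the endpoint first coordinate is an integer
  have hπ0 : ((0:ℝ) : AddCircle (1:ℝ)) = 0 := rfl
  obtain ⟨k, hkt⟩ : ∃ k : ℤ, (γ t).1 = (k : ℝ) := by
    have h1 : (((γ t).1 : ℝ) : AddCircle (1:ℝ)) = ((0:ℝ) : AddCircle (1:ℝ)) :=
      congrArg Prod.fst hend
    rw [hπ0, AddCircle.coe_eq_zero_iff] at h1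
    obtain ⟨n, hn⟩ := h1
    exact ⟨n, by simpa using hn.symm⟩
  -- the open pieces
  set S : Set ℝ := ⋃ i : Fin N, Set.Ioo (p i.castSucc) (p i.succ) with hSdef
  have hcover : ∀ s ∈ Set.Icc (0:ℝ) t, s ∉ Set.range p → s ∈ S := by
    intro s hs hnr
    have h0lt : p 0 < s := lt_of_le_of_ne (hp0.le.trans hs.1) (fun h => hnr ⟨0, h⟩)
    set F : Finset (Fin (N+1)) := Finset.univ.filter (fun i => p i < s) with hF
    have hFne : F.Nonempty := ⟨0, Finset.mem_filter.2 ⟨Finset.mem_univ _, h0lt⟩⟩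
    set i0 : Fin (N+1) := F.max' hFne with hi0def
    have hi0 : p i0 < s := (Finset.mem_filter.1 (F.max'_mem hFne)).2
    have hilast : i0 ≠ Fin.last N := by
      intro h
      rw [h, hpl] at hi0
      exact absurd hi0 (not_lt.2 hs.2)
    have hvlt : (i0 : ℕ) < N := Fin.val_lt_last hilast
    set j : Fin N := ⟨i0, hvlt⟩ with hjdef
    have hcast : j.castSucc = i0 := rfl
    have hle : s ≤ p j.succ := by
      by_contra h
      push_neg at h
      have hmem : j.succ ∈ F := Finset.mem_filter.2 ⟨Finset.mem_univ _, h⟩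
      have h1 := F.le_max' j.succ hmem
      have h2 : i0 < j.succ := by
        rw [Fin.lt_iff_val_lt_val]
        simp [hjdef, Fin.val_succ]
      exact absurd h1 (not_le.2 h2)
    have hlt : s < p j.succ := lt_of_le_of_ne hle (fun h => hnr ⟨j.succ, h.symm⟩)
    exact Set.mem_iUnion.2 ⟨j, hi0, hlt⟩
  have hdiffS : ∀ s ∈ S, DifferentiableAt ℝ γ s := by
    intro s hs
    obtain ⟨i, hi⟩ := Set.mem_iUnion.1 hs
    exact ((hC1 i).differentiableOn one_ne_zero).differentiableAt (Icc_mem_nhds hi.1 hi.2)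
  -- bound on the derivative on S
  have hBi : ∀ i : Fin N, ∃ C : ℝ, ∀ x ∈ Set.Ioo (p i.castSucc) (p i.succ), ‖deriv γ x‖ ≤ C := by
    intro i
    rcases lt_or_ge (p i.castSucc) (p i.succ) with hlt | hge
    · have hud : UniqueDiffOn ℝ (Set.Icc (p i.castSucc) (p i.succ)) := uniqueDiffOn_Icc hlt
      have hcd : ContinuousOn (derivWithin γ (Set.Icc (p i.castSucc) (p i.succ)))
          (Set.Icc (p i.castSucc) (p i.succ)) :=
        (hC1 i).continuousOn_derivWithin hud le_rfl
      obtain ⟨C, hC⟩ := isCompact_Icc.exists_bound_of_continuousOn hcd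
      refine ⟨C, fun x hx => ?_⟩
      have hx' : Set.Icc (p i.castSucc) (p i.succ) ∈ nhds x := Icc_mem_nhds hx.1 hx.2
      have := hC x (Set.Ioo_subset_Icc_self hx)
      rwa [derivWithin_of_mem_nhds hx'] at this
    · exact ⟨0, fun x hx => absurd (hx.1.trans hx.2) (not_lt.2 hge)⟩
  choose C hC using hBi
  set M : ℝ := ∑ i : Fin N, |C i| with hMdef
  have hMS : ∀ s ∈ S, ‖deriv γ s‖ ≤ M := by
    intro s hs
    obtain ⟨i, hi⟩ := Set.mem_iUnion.1 hs
    calc ‖deriv γ s‖ ≤ C i := hC i s hi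
      _ ≤ |C i| := le_abs_self _
      _ ≤ M := Finset.single_le_sum (fun j _ => abs_nonneg (C j)) (Finset.mem_univ i)
  -- a.e. statements
  have hnullc : volume (Set.Ioc (0:ℝ) t \ S) = 0 := by
    have hsub : Set.Ioc (0:ℝ) t \ S ⊆ Set.range p := by
      intro s hs
      by_contra hnr
      exact hs.2 (hcover s (Set.Ioc_subset_Icc_self hs.1) hnr)
    exact measure_mono_null hsub ((Set.finite_range p).countable.measure_zero _)
  have haeS : ∀ᵐ s ∂(volume : Measure ℝ), s ∈ Set.Ioc (0:ℝ) t → s ∈ S := by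
    rw [ae_iff]
    refine measure_mono_null (fun s hs => ?_) hnullc
    simp only [Set.mem_setOf_eq, Classical.not_imp] at hs
    exact hs
  have haeS' : ∀ᵐ s ∂(volume.restrict (Set.Ioc (0:ℝ) t)), s ∈ S := by
    filter_upwards [ae_restrict_mem measurableSet_Ioc,
      haeS.filter_mono (ae_mono Measure.restrict_le_self)] with s h1 h2
    exact h2 h1
  haveI : IsFiniteMeasure (volume.restrict (Set.Ioc (0:ℝ) t)) :=
    ⟨by rw [Measure.restrict_apply_univ]; exact measure_Ioc_lt_top⟩
  -- the pieces of the integrand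
  set h1f : ℝ → ℝ := fun s => (1/2) * (deriv γ s).1 ^ 2 with hh1def
  set gf : ℝ → ℝ := fun s => 1 - Real.cos (2 * Real.pi * (γ s).1) with hgdef
  set f2 : ℝ → ℝ := fun s => (1/2) * ((deriv γ s).2 - c) ^ 2 with hf2def
  have hfe : (fun s => La c (γ s) (deriv γ s)) = fun s => h1f s + gf s + f2 s := by
    funext s
    simp only [hh1def, hgdef, hf2def, La]
    ring
  have hmeasd : Measurable (deriv γ) := measurable_deriv γ
  have hInt_h1 : IntervalIntegrable h1f volume 0 t := by
    rw [intervalIntegrable_iff_integrableOn_Ioc_of_le ht.le]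
    refine Integrable.mono' (integrable_const ((1/2) * M ^ 2)) ?_ ?_
    · exact ((hmeasd.fst.pow_const 2).const_mul _).aestronglyMeasurable
    · filter_upwards [haeS'] with s hs
      have h := hMS s hs
      have hfst : |(deriv γ s).1| ≤ M := by
        calc |(deriv γ s).1| = ‖(deriv γ s).1‖ := (Real.norm_eq_abs _).symm
          _ ≤ ‖deriv γ s‖ := norm_fst_le _
          _ ≤ M := h
      have h2 : (deriv γ s).1 ^ 2 ≤ M ^ 2 := by
        nlinarith [abs_nonneg (deriv γ s).1, sq_abs (deriv γ s).1]
      rw [Real.norm_eq_abs, abs_of_nonneg (by positivity)]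
      simp only [hh1def]
      linarith
  have hInt_f2 : IntervalIntegrable f2 volume 0 t := by
    rw [intervalIntegrable_iff_integrableOn_Ioc_of_le ht.le]
    refine Integrable.mono' (integrable_const ((1/2) * (M + |c|) ^ 2)) ?_ ?_
    · exact (((hmeasd.snd.sub measurable_const).pow_const 2).const_mul _).aestronglyMeasurable
    · filter_upwards [haeS'] with s hs
      have h := hMS s hs
      have hsnd : |(deriv γ s).2| ≤ M := by
        calc |(deriv γ s).2| = ‖(deriv γ s).2‖ := (Real.norm_eq_abs _).symm
          _ ≤ ‖deriv γ s‖ := norm_snd_le _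
          _ ≤ M := h
      have habs : |(deriv γ s).2 - c| ≤ M + |c| := by
        have := abs_sub_abs_le_abs_sub ((deriv γ s).2) c
        have h2 := abs_sub ((deriv γ s).2) c
        calc |(deriv γ s).2 - c| ≤ |(deriv γ s).2| + |c| := abs_sub _ _
          _ ≤ M + |c| := by linarith
      have h2 : ((deriv γ s).2 - c) ^ 2 ≤ (M + |c|) ^ 2 := by
        nlinarith [abs_nonneg ((deriv γ s).2 - c), sq_abs ((deriv γ s).2 - c)]
      rw [Real.norm_eq_abs, abs_of_nonneg (by positivity)]
      simp only [hf2def]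
      linarith
  have hcontγ1 : ContinuousOn (fun s => (γ s).1) (Set.Icc (0:ℝ) t) :=
    continuous_fst.comp_continuousOn hcont
  have hcont_g : ContinuousOn gf (Set.Icc (0:ℝ) t) := by
    simp only [hgdef]
    exact continuousOn_const.sub
      (Real.continuous_cos.comp_continuousOn (continuousOn_const.mul hcontγ1))
  have hInt_g : IntervalIntegrable gf volume 0 t := by
    apply ContinuousOn.intervalIntegrable
    rwa [Set.uIcc_of_le ht.le]
  have hgnonneg : ∀ s, 0 ≤ gf s := by
    intro s
    have := Real.cos_le_one (2 * Real.pi * (γ s).1)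
    simp only [hgdef]
    linarith
  have hint_eq : (∫ s in (0:ℝ)..t, La c (γ s) (deriv γ s)) =
      (∫ s in (0:ℝ)..t, h1f s) + (∫ s in (0:ℝ)..t, gf s) + ∫ s in (0:ℝ)..t, f2 s := by
    rw [show (fun s => La c (γ s) (deriv γ s)) = fun s => h1f s + gf s + f2 s from hfe]
    rw [intervalIntegral.integral_add (hInt_h1.add hInt_g) hInt_f2,
      intervalIntegral.integral_add hInt_h1 hInt_g]
  -- the comparison curve
  set γt : ℝ → ℝ × ℝ := fun s => ((k:ℝ), (γ s).2) with hγtdef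
  have hγt_pc : PiecewiseC1On γt 0 t := by
    refine ⟨continuousOn_const.prodMk (continuous_snd.comp_continuousOn hcont),
      N, p, hp0, hpl, hmono, fun i => ?_⟩
    exact contDiffOn_const.prodMk (contDiff_snd.comp_contDiffOn (hC1 i))
  have hcoe_k : (((k:ℤ):ℝ) : AddCircle (1:ℝ)) = ((0:ℝ) : AddCircle (1:ℝ)) := by
    rw [hπ0, AddCircle.coe_eq_zero_iff]
    exact ⟨k, by simp⟩
  have hγt_end : p2 (γt t) = p2 (0, yt0) := by
    have h2 : (((γ t).2 : ℝ) : AddCircle (1:ℝ)) = (yt0 : AddCircle (1:ℝ)) :=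
      congrArg Prod.snd hend
    simp only [p2, hγtdef]
    exact Prod.ext_iff.2 ⟨hcoe_k, h2⟩
  have hderiv_γt : ∀ s ∈ S, deriv γt s = ((0:ℝ), (deriv γ s).2) := by
    intro s hs
    have hda : HasDerivAt γ (deriv γ s) s := (hdiffS s hs).hasDerivAt
    have hd2 : HasDerivAt (fun x => (γ x).2) (deriv γ s).2 s := by
      have := (ContinuousLinearMap.snd ℝ ℝ ℝ).hasFDerivAt.comp_hasDerivAt s hda
      simpa [Function.comp_def] using this
    have hprod : HasDerivAt γt ((0:ℝ), (deriv γ s).2) s :=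
      (hasDerivAt_const s ((k:ℤ):ℝ)).prodMk hd2
    exact hprod.deriv
  have hcos_k : Real.cos (2 * Real.pi * ((k:ℤ):ℝ)) = 1 := by
    rw [show 2 * Real.pi * ((k:ℤ):ℝ) = ((k:ℤ):ℝ) * (2 * Real.pi) by ring]
    exact Real.cos_int_mul_two_pi k
  have h_act_γt : actionA c γt 0 t = ∫ s in (0:ℝ)..t, f2 s := by
    apply intervalIntegral.integral_congr_ae
    filter_upwards [haeS] with s hsae hsmem
    have hsS : s ∈ S := hsae (by rwa [Set.uIoc_of_le ht.le] at hsmem)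
    rw [hderiv_γt s hsS]
    simp only [hγtdef, La, hf2def, hcos_k]
    ring
  -- lower bound for the Lax-Oleinik infimum
  have hLa_nonneg : ∀ q v : ℝ × ℝ, 0 ≤ La c q v := by
    intro q v
    have h := Real.cos_le_one (2 * Real.pi * q.1)
    simp only [La]
    nlinarith [sq_nonneg v.1, sq_nonneg (v.2 - c)]
  have haction_nonneg : ∀ δ : ℝ → ℝ × ℝ, 0 ≤ actionA c δ 0 t := fun δ =>
    intervalIntegral.integral_nonneg ht.le (fun s _ => hLa_nonneg _ _)
  obtain ⟨qm, -, hqm⟩ := isCompact_univ.exists_isMinOn Set.univ_nonempty hu.continuousOn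
  have hbdd : BddBelow {A : ℝ | ∃ δ : ℝ → ℝ × ℝ, PiecewiseC1On δ 0 t ∧
      p2 (δ t) = p2 (0, yt0) ∧ A = u (p2 (δ 0)) + actionA c δ 0 t} := by
    refine ⟨u qm, fun A hA => ?_⟩
    obtain ⟨δ, -, -, rfl⟩ := hA
    have h1 : u qm ≤ u (p2 (δ 0)) := isMinOn_iff.mp hqm (p2 (δ 0)) (Set.mem_univ _)
    have h2 := haction_nonneg δ
    linarith
  have hTle : Tlo c t u (p2 (0, yt0)) ≤ u (p2 (γt 0)) + actionA c γt 0 t := by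
    unfold Tlo
    exact csInf_le hbdd ⟨γt, hγt_pc, hγt_end, rfl⟩
  have hu_eq : u (p2 (γt 0)) = u (p2 (γ 0)) := hind ((k:ℤ):ℝ) (γ 0).1 (γ 0).2
  have hkey : actionA c γ 0 t ≤ ∫ s in (0:ℝ)..t, f2 s := by
    rw [← h_act_γt]
    rw [hu_eq] at hTle
    rw [← hmin] at hTle
    linarith
  -- conclude the x-part integral vanishes
  have hg_int_zero : (∫ s in (0:ℝ)..t, gf s) = 0 := by
    have h1nn : 0 ≤ ∫ s in (0:ℝ)..t, h1f s :=
      intervalIntegral.integral_nonneg ht.le (fun s _ => by simp only [hh1def]; positivity)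
    have hgnn : 0 ≤ ∫ s in (0:ℝ)..t, gf s :=
      intervalIntegral.integral_nonneg ht.le (fun s _ => hgnonneg s)
    have ha : actionA c γ 0 t = ∫ s in (0:ℝ)..t, La c (γ s) (deriv γ s) := rfl
    rw [ha, hint_eq] at hkey
    linarith
  have hae0 : ∀ᵐ s ∂(volume.restrict (Set.Ioc (0:ℝ) t)), gf s = 0 := by
    have hIntOn : IntegrableOn gf (Set.Ioc (0:ℝ) t) volume :=
      (intervalIntegrable_iff_integrableOn_Ioc_of_le ht.le).1 hInt_g
    have hset : (∫ s in Set.Ioc (0:ℝ) t, gf s) = 0 := by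
      rw [← intervalIntegral.integral_of_le ht.le]
      exact hg_int_zero
    have := (integral_eq_zero_iff_of_nonneg hgnonneg hIntOn).1 hset
    filter_upwards [this] with s hs
    simpa using hs
  have hgzero : ∀ s ∈ Set.Icc (0:ℝ) t, gf s = 0 :=
    contOn_eq_zero_of_ae ht hcont_g hae0
  -- integrality of the first coordinate
  have hint : ∀ s ∈ Set.Icc (0:ℝ) t, ∃ n : ℤ, (γ s).1 = (n : ℝ) := by
    intro s hs
    have hzero := hgzero s hs
    have hcos : Real.cos (2 * Real.pi * (γ s).1) = 1 := by
      simp only [hgdef] at hzero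
      linarith
    obtain ⟨n, hn⟩ := (Real.cos_eq_one_iff _).1 hcos
    refine ⟨n, ?_⟩
    have hpi : (0:ℝ) < 2 * Real.pi := by positivity
    have h2 : ((γ s).1 - (n:ℝ)) * (2 * Real.pi) = 0 := by linear_combination -hn
    rcases mul_eq_zero.1 h2 with h | h
    · linarith
    · linarith
  -- constancy via the intermediate value theorem
  have hconst : ∀ s ∈ Set.Icc (0:ℝ) t, (γ s).1 = ((k:ℤ) : ℝ) := by
    intro s hs
    obtain ⟨m, hm⟩ := hint s hs
    by_contra hne
    have hmk : (m:ℝ) ≠ ((k:ℤ):ℝ) := fun h => hne (hm.trans h)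
    have hst : s ≤ t := hs.2
    have hγ1c : ContinuousOn (fun x => (γ x).1) (Set.Icc s t) :=
      hcontγ1.mono (Set.Icc_subset_Icc hs.1 le_rfl)
    have halfint : ∀ x ∈ Set.Icc s t, ∀ z : ℤ, (γ x).1 = (z:ℝ) + 1/2 → False := by
      intro x hx z hz
      obtain ⟨n, hn⟩ := hint x (⟨hs.1.trans hx.1, hx.2⟩)
      have hcast : ((2*n : ℤ) : ℝ) = ((2*z+1 : ℤ) : ℝ) := by
        push_cast
        rw [hn] at hz
        linarith
      have := Int.cast_injective hcast
      omega
    rcases lt_or_gt_of_ne hmk with hlt | hgt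
    · have hmlek : m + 1 ≤ k := by
        have : m < k := by exact_mod_cast hlt
        omega
      have hy : (m:ℝ) + 1/2 ∈ Set.Icc ((fun x => (γ x).1) s) ((fun x => (γ x).1) t) := by
        simp only [hm, hkt]
        constructor
        · linarith
        · have : ((m:ℤ):ℝ) + 1 ≤ ((k:ℤ):ℝ) := by exact_mod_cast hmlek
          linarith
      obtain ⟨x, hx, hgx⟩ := intermediate_value_Icc hst hγ1c hy
      exact halfint x hx m hgx
    · have hklem : k + 1 ≤ m := by
        have : k < m := by exact_mod_cast hgt
        omega
      have hy : ((k:ℤ):ℝ) + 1/2 ∈ Set.Icc ((fun x => (γ x).1) t) ((fun x => (γ x).1) s) := by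
        simp only [hm, hkt]
        constructor
        · linarith
        · have : ((k:ℤ):ℝ) + 1 ≤ ((m:ℤ):ℝ) := by exact_mod_cast hklem
          linarith
      obtain ⟨x, hx, hgx⟩ := intermediate_value_Icc' hst hγ1c hy
      exact halfint x hx k hgx
  refine ⟨⟨k, hconst⟩, fun s hs => ?_⟩
  refine ⟨(γ s).2, ?_⟩
  have h1 : (((γ s).1 : ℝ) : AddCircle (1:ℝ)) = ((0:ℝ) : AddCircle (1:ℝ)) := by
    rw [hconst s hs]
    exact hcoe_k
  simp only [p2, circ0]
  exact Prod.ext_iff.2 ⟨h1, rfl⟩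
end
end

section
/- For the autonomous Lagrangian L_a(x,y,ẋ,ẏ) = (1/2)ẋ² + 1 − cos(2πx) + (1/2)(ẏ−c)² on 𝕋² = ℝ²/ℤ² and the function u_δ with 0 < δ < 1/2: for every t > 0 with dist(ct,ℤ) ≤ δ/2, one has T_t u_δ(π(0,1/2)) ≥ min( δ/4, δ²/(32t) ). -/
open Set Filter MeasureTheory

noncomputable section

lemma La_ge (c : ℝ) (q v : ℝ × ℝ) : (1/2) * (v.2 - c)^2 ≤ La c q v := by
  have h := Real.cos_le_one (2 * Real.pi * q.1)
  unfold La; nlinarith [sq_nonneg v.1]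

lemma norm_AC_le (x : ℝ) : ‖((x : ℝ) : AddCircle (1:ℝ))‖ ≤ |x| := by
  rw [AddCircle.norm_eq]
  simpa using round_le x 0

lemma coe_AC_sub (a b : ℝ) : ((a - b : ℝ) : AddCircle (1:ℝ)) = (a : AddCircle (1:ℝ)) - (b : AddCircle (1:ℝ)) := by
  simp [sub_eq_add_neg]

private lemma piece (c : ℝ) {γ : ℝ → ℝ × ℝ} {a b : ℝ} (hab : a ≤ b)
    (hγ : ContDiffOn ℝ 1 γ (Set.Icc a b)) :
    IntervalIntegrable (fun s => La c (γ s) (deriv γ s)) volume a b ∧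
    IntervalIntegrable (fun s => (deriv γ s).2 - c) volume a b ∧
    IntervalIntegrable (fun s => ((deriv γ s).2 - c)^2) volume a b ∧
    (∫ s in a..b, ((deriv γ s).2 - c)) = (γ b).2 - (γ a).2 - c * (b - a) := by
  rcases eq_or_lt_of_le hab with rfl | hlt
  · exact ⟨.refl, .refl, .refl, by simp⟩
  set g := derivWithin γ (Set.Icc a b) with hgdef
  have hU : UniqueDiffOn ℝ (Set.Icc a b) := uniqueDiffOn_Icc hlt
  have hgc : ContinuousOn g (Set.Icc a b) := hγ.continuousOn_derivWithin hU le_rfl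
  have hγc : ContinuousOn γ (Set.Icc a b) := hγ.continuousOn
  have hd : ∀ x ∈ Set.Ioo a b, HasDerivAt γ (g x) x := by
    intro x hx
    have hmem : Set.Icc a b ∈ nhds x := Icc_mem_nhds hx.1 hx.2
    have hdw : DifferentiableWithinAt ℝ γ (Set.Icc a b) x :=
      (hγ.differentiableOn one_ne_zero) x (Set.Ioo_subset_Icc_self hx)
    have hda : DifferentiableAt ℝ γ x := hdw.differentiableAt hmem
    have hge : g x = deriv γ x := derivWithin_of_mem_nhds hmem
    rw [hge]; exact hda.hasDerivAt
  have heq : ∀ x ∈ Set.Ioo a b, deriv γ x = g x := fun x hx => (hd x hx).deriv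
  have hb : ∀ᵐ x : ℝ ∂volume, x ≠ b := by
    have : volume ({b} : Set ℝ) = 0 := Real.volume_singleton
    simpa [ae_iff]
  have hae : ∀ᵐ x ∂(volume.restrict (Set.uIoc a b)), deriv γ x = g x := by
    rw [uIoc_of_le hab]
    filter_upwards [ae_restrict_mem measurableSet_Ioc, ae_restrict_of_ae hb] with x hx hxb
    exact heq x ⟨hx.1, lt_of_le_of_ne hx.2 hxb⟩
  have key : ∀ F : ℝ → (ℝ × ℝ) → ℝ, ContinuousOn (fun s => F s (g s)) (Set.Icc a b) →
      IntervalIntegrable (fun s => F s (deriv γ s)) volume a b ∧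
      (∫ s in a..b, F s (deriv γ s)) = ∫ s in a..b, F s (g s) := by
    intro F hF
    have hFint : IntervalIntegrable (fun s => F s (g s)) volume a b :=
      (hF.mono (by rw [uIcc_of_le hab])).intervalIntegrable
    have haeF : (fun s => F s (g s)) =ᵐ[volume.restrict (Set.uIoc a b)] (fun s => F s (deriv γ s)) := by
      filter_upwards [hae] with x hx; rw [hx]
    refine ⟨hFint.congr_ae haeF, ?_⟩
    apply intervalIntegral.integral_congr_ae
    filter_upwards [hb] with x hxb hxin
    rw [uIoc_of_le hab] at hxin
    rw [heq x ⟨hxin.1, lt_of_le_of_ne hxin.2 hxb⟩]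
  have hgc2 : ContinuousOn (fun s => (g s).2) (Set.Icc a b) := hgc.snd
  have k1 := key (fun s v => La c (γ s) v) (by
    unfold La
    fun_prop)
  have k2 := key (fun _ v => v.2 - c) (by fun_prop)
  have k3 := key (fun _ v => (v.2 - c)^2) (by fun_prop)
  refine ⟨k1.1, k2.1, k3.1, ?_⟩
  rw [k2.2]
  have hftc : (∫ s in a..b, (g s).2) = (γ b).2 - (γ a).2 := by
    apply intervalIntegral.integral_eq_sub_of_hasDerivAt_of_le hab (hγc.snd)
    · intro x hx
      simpa using ((hd x hx).hasFDerivAt.snd.hasDerivAt)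
    · exact (hgc2.mono (by rw [uIcc_of_le hab])).intervalIntegrable
  rw [intervalIntegral.integral_sub ((hgc2.mono (by rw [uIcc_of_le hab])).intervalIntegrable) intervalIntegrable_const,
      hftc, intervalIntegral.integral_const]
  simp [smul_eq_mul]; ring

lemma cs_step (t : ℝ) (ht : 0 < t) (f : ℝ → ℝ)
    (h1 : IntervalIntegrable f volume 0 t)
    (h2 : IntervalIntegrable (fun s => f s ^ 2) volume 0 t) :
    (∫ s in (0:ℝ)..t, f s)^2 / t ≤ ∫ s in (0:ℝ)..t, f s ^ 2 := by
  set I := ∫ s in (0:ℝ)..t, f s with hI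
  set m := I / t with hm
  have h0 : 0 ≤ ∫ s in (0:ℝ)..t, (f s - m)^2 :=
    intervalIntegral.integral_nonneg ht.le (fun _ _ => sq_nonneg _)
  have hexp : (∫ s in (0:ℝ)..t, (f s - m)^2)
      = (∫ s in (0:ℝ)..t, f s ^ 2) - 2*m*I + m^2 * t := by
    have hfe : (fun s => (f s - m)^2) = fun s => (f s^2 - (2*m) * f s) + m^2 := by
      funext s; ring
    rw [hfe, intervalIntegral.integral_add (h2.sub (h1.const_mul (2*m))) intervalIntegrable_const,
        intervalIntegral.integral_sub h2 (h1.const_mul (2*m)),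
        intervalIntegral.integral_const_mul, intervalIntegral.integral_const, ← hI]
    simp [smul_eq_mul]; ring
  rw [hexp] at h0
  have hmt : m * t = I := by rw [hm]; field_simp
  have : I^2 / t = 2*m*I - m^2*t := by
    field_simp [hm]; rw [← hmt]; ring
  linarith

lemma action_key (c t : ℝ) (ht : 0 < t) {γ : ℝ → ℝ × ℝ}
    (h : PiecewiseC1On γ 0 t) :
    ((γ t).2 - (γ 0).2 - c * t)^2 / (2 * t) ≤ actionA c γ 0 t := by
  obtain ⟨hcont, N, p, hp0, hpN, hmono, hC1⟩ := h
  set q : ℕ → ℝ := fun k => p ⟨min k N, Nat.lt_succ_of_le (min_le_right k N)⟩ with hqdef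
  have hq0 : q 0 = 0 := by
    rw [hqdef]
    simp only
    rw [show (⟨min 0 N, Nat.lt_succ_of_le (min_le_right 0 N)⟩ : Fin (N+1)) = 0 by ext; simp]
    exact hp0
  have hqN : q N = t := by
    rw [hqdef]
    simp only
    rw [show (⟨min N N, Nat.lt_succ_of_le (min_le_right N N)⟩ : Fin (N+1)) = Fin.last N by ext; simp [Fin.last]]
    exact hpN
  have hqle : ∀ k, q k ≤ q (k+1) := by
    intro k
    apply hmono
    simp [Fin.le_def]
  have hC1' : ∀ k < N, ContDiffOn ℝ 1 γ (Set.Icc (q k) (q (k+1))) := by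
    intro k hk
    have h1 : (⟨min k N, Nat.lt_succ_of_le (min_le_right k N)⟩ : Fin (N+1)) = (⟨k, hk⟩ : Fin N).castSucc := by
      ext; simp [Nat.min_eq_left hk.le]
    have h2 : (⟨min (k+1) N, Nat.lt_succ_of_le (min_le_right (k+1) N)⟩ : Fin (N+1)) = (⟨k, hk⟩ : Fin N).succ := by
      ext; simp [Nat.min_eq_left hk]
    rw [hqdef]; simp only; rw [h1, h2]
    exact hC1 ⟨k, hk⟩
  have hfacts := fun k (hk : k < N) => piece c (hqle k) (hC1' k hk)
  set f : ℝ → ℝ := fun s => (deriv γ s).2 - c with hf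
  have hIntLa : IntervalIntegrable (fun s => La c (γ s) (deriv γ s)) volume 0 t := by
    rw [← hq0, ← hqN]
    exact IntervalIntegrable.trans_iterate (fun k hk => (hfacts k hk).1)
  have hIntf : IntervalIntegrable f volume 0 t := by
    rw [← hq0, ← hqN]
    exact IntervalIntegrable.trans_iterate (fun k hk => (hfacts k hk).2.1)
  have hIntf2 : IntervalIntegrable (fun s => f s ^ 2) volume 0 t := by
    rw [← hq0, ← hqN]
    exact IntervalIntegrable.trans_iterate (fun k hk => (hfacts k hk).2.2.1)
  have hIf : (∫ s in (0:ℝ)..t, f s) = (γ t).2 - (γ 0).2 - c * t := by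
    have hsum := intervalIntegral.sum_integral_adjacent_intervals
      (f := f) (μ := volume) (a := q) (n := N) (fun k hk => (hfacts k hk).2.1)
    rw [hq0, hqN] at hsum
    rw [← hsum]
    have : ∀ k ∈ Finset.range N, (∫ s in (q k)..(q (k+1)), f s)
        = ((γ (q (k+1))).2 - c * q (k+1)) - ((γ (q k)).2 - c * q k) := by
      intro k hk
      rw [hf]
      rw [(hfacts k (Finset.mem_range.mp hk)).2.2.2]
      ring
    rw [Finset.sum_congr rfl this, Finset.sum_range_sub (fun k => (γ (q k)).2 - c * q k)]
    rw [hq0, hqN]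
    ring
  have hmono2 : (∫ s in (0:ℝ)..t, (1/2) * f s ^ 2) ≤ actionA c γ 0 t := by
    apply intervalIntegral.integral_mono_on ht.le (hIntf2.const_mul (1/2)) hIntLa
    intro x _
    exact La_ge c (γ x) (deriv γ x)
  have hcs := cs_step t ht f hIntf hIntf2
  rw [hIf] at hcs
  rw [intervalIntegral.integral_const_mul] at hmono2
  have h2t : ((γ t).2 - (γ 0).2 - c * t)^2 / (2*t) = (1/2) * (((γ t).2 - (γ 0).2 - c * t)^2 / t) := by
    ring
  rw [h2t]
  linarith

/-- For `L_a` on `𝕋²` and `u_δ` with `0 < δ < 1/2`: for every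
`t > 0` with `dist(ct, ℤ) ≤ δ/2`, one has
`T_t u_δ (π(0,1/2)) ≥ min(δ/4, δ²/(32t))`. -/
theorem laxOleinik_lower_bound_along_sequence (c δ t : ℝ)
    (hδ0 : 0 < δ) (hδ : δ < 1 / 2) (ht : 0 < t)
    (hct : ‖((c * t : ℝ) : AddCircle (1 : ℝ))‖ ≤ δ / 2) :
    min (δ / 4) (δ ^ 2 / (32 * t)) ≤ Tlo c t (udelta δ) (p2 (0, 1 / 2)) := by
  apply le_csInf
  · refine ⟨udelta δ (p2 ((fun _ => ((0:ℝ),(1/2:ℝ))) 0)) + actionA c (fun _ => ((0:ℝ),(1/2:ℝ))) 0 t,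
      (fun _ => ((0:ℝ),(1/2:ℝ))), ⟨continuousOn_const, 1, fun i => (i:ℕ) * t, by simp, by simp, ?_, fun i => contDiffOn_const⟩, rfl, rfl⟩
    intro i j hij
    exact mul_le_mul_of_nonneg_right (by exact_mod_cast hij) ht.le
  · rintro A ⟨γ, hγ, hend, rfl⟩
    set y0 := (γ 0).2 with hy0def
    set y1 := (γ t).2 with hy1def
    set d := ‖((y0 - 1/2 : ℝ) : AddCircle (1:ℝ))‖ with hddef
    have hu : δ - d ≤ udelta δ (p2 (γ 0)) := by
      have he : (p2 (γ 0)).2 - ((1/2:ℝ) : AddCircle (1:ℝ)) = ((y0 - 1/2 : ℝ) : AddCircle (1:ℝ)) := by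
        rw [coe_AC_sub]; rfl
      unfold udelta; rw [he]; exact le_max_left _ _
    have hu0 : 0 ≤ udelta δ (p2 (γ 0)) := le_max_right _ _
    have haction := action_key c t ht hγ
    have ha0 : 0 ≤ actionA c γ 0 t := le_trans (by positivity) haction
    have hy1 : ((y1 : ℝ) : AddCircle (1:ℝ)) = ((1/2 : ℝ) : AddCircle (1:ℝ)) := congrArg Prod.snd hend
    have hnorm : d - δ/2 ≤ |y1 - y0 - c * t| := by
      have h1 : ((y1 - y0 - c*t : ℝ) : AddCircle (1:ℝ))
          = -(((y0 - 1/2:ℝ) : AddCircle (1:ℝ))) - ((c*t:ℝ) : AddCircle (1:ℝ)) := by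
        simp only [coe_AC_sub, hy1]
        abel
      calc d - δ/2 ≤ ‖((y1 - y0 - c*t : ℝ) : AddCircle (1:ℝ))‖ := by
              rw [h1]
              have h2 := norm_sub_norm_le (-(((y0 - 1/2:ℝ) : AddCircle (1:ℝ)))) (((c*t:ℝ) : AddCircle (1:ℝ)))
              rw [norm_neg] at h2
              rw [← hddef] at h2
              linarith
        _ ≤ |y1 - y0 - c*t| := norm_AC_le _
    rcases le_or_gt d (3*δ/4) with hcase | hcase
    · calc min (δ/4) (δ^2/(32*t)) ≤ δ/4 := min_le_left _ _
        _ ≤ udelta δ (p2 (γ 0)) + actionA c γ 0 t := by linarith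
    · have h14 : δ/4 ≤ |y1 - y0 - c*t| := by linarith
      have hsq : (δ/4)^2 ≤ (y1 - y0 - c*t)^2 := by
        rw [← sq_abs (y1 - y0 - c*t)]
        exact pow_le_pow_left₀ (by positivity) h14 2
      have hdiv : δ^2/(32*t) ≤ (y1 - y0 - c*t)^2 / (2*t) := by
        rw [show δ^2/(32*t) = (δ/4)^2/(2*t) by ring]
        exact div_le_div_of_nonneg_right hsq (by positivity)
      calc min (δ/4) (δ^2/(32*t)) ≤ δ^2/(32*t) := min_le_right _ _
        _ ≤ udelta δ (p2 (γ 0)) + actionA c γ 0 t := by linarith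
end
end
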